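/- arXiv:1408.6943 — 5 statements merged into one kernel-verified Lean document; each statement's English description precedes it below -/
import Mathlib

section
/- Let q be a prime power and n ≥ 1. The number of tuples (d_1,...,d_n) ∈ F_q^n such that the n×n matrix over F_q with diagonal entries d_1,...,d_n and all off-diagonal entries equal to 1 is invertible equals ((q-1)^(n+1) + (-1)^n)/q + n·(q-1)^(n-1). -/
open Finset Matrix

section SchroAux

lemma det_updateRow_one {R : Type*} [CommRing R] {m : Type*} [DecidableEq m] [Fintype m]
    (i : m) (b : m → R) : ((1 : Matrix m m R).updateRow i b).det = b i := by
  rw [← Matrix.cramer_transpose_apply, Matrix.transpose_one, Matrix.cramer_one]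
  rfl

lemma det_formula {R : Type*} [CommRing R] (n : ℕ) (d : Fin n → R) :
    (Matrix.of fun i j => if i = j then d i else 1).det
      = (∏ i, (d i - 1)) + ∑ i, ∏ j ∈ Finset.univ.erase i, (d j - 1) := by
  classical
  set w : Fin n → (Fin n → R) := fun i j => if j = i then 1 else 0 with hw
  set u : Fin n → (Fin n → R) := fun i => (d i - 1) • w i with hu
  set v : Fin n → (Fin n → R) := fun _ _ => 1 with hv
  have key : (Matrix.of fun i j => if i = j then d i else 1).det
      = ∑ s : Finset (Fin n), (Matrix.detRowAlternating (s.piecewise u v) : R) := by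
    have hM : (Matrix.of fun i j => if i = j then d i else 1 : Matrix (Fin n) (Fin n) R)
        = Matrix.of (u + v) := by
      funext i j
      simp only [Matrix.of_apply, Pi.add_apply, hu, hv, hw, Pi.smul_apply, smul_eq_mul]
      by_cases h : i = j
      · subst h; simp
      · simp [h, Ne.symm h]
    rw [hM]
    exact (Matrix.detRowAlternating :
      (Fin n → R) [⋀^Fin n]→ₗ[R] R).toMultilinearMap.map_add_univ u v
  rw [key]
  have hterm : ∀ s : Finset (Fin n),
      (Matrix.detRowAlternating (s.piecewise u v) : R)
        = if sᶜ.card ≤ 1 then ∏ i ∈ s, (d i - 1) else 0 := by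
    intro s
    by_cases hs : sᶜ.card ≤ 1
    · rw [if_pos hs]
      have hpw : s.piecewise u v
          = fun i => (if i ∈ s then d i - 1 else 1) • (if i ∈ s then w i else v i) := by
        funext i
        by_cases h : i ∈ s <;> simp [Finset.piecewise, h, hu]
      have h2 : (Matrix.detRowAlternating (s.piecewise u v) : R)
          = (∏ i, if i ∈ s then d i - 1 else 1) *
            (Matrix.detRowAlternating (fun i => if i ∈ s then w i else v i) : R) := by
        rw [hpw]
        exact ((Matrix.detRowAlternating :
          (Fin n → R) [⋀^Fin n]→ₗ[R] R).toMultilinearMap.map_smul_univ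
          (fun i => if i ∈ s then d i - 1 else 1)
          (fun i => if i ∈ s then w i else v i)).trans (smul_eq_mul _ _)
      rw [h2]
      have hprod : (∏ i, if i ∈ s then d i - 1 else (1:R)) = ∏ i ∈ s, (d i - 1) := by
        rw [Finset.prod_ite_mem, Finset.univ_inter]
      rw [hprod]
      have hdet1 : (Matrix.detRowAlternating
          (fun i => if i ∈ s then w i else v i) : R) = 1 := by
        rcases Nat.le_one_iff_eq_zero_or_eq_one.mp hs with h0 | h1
        · have hsu : ∀ i, i ∈ s := by
            intro i
            by_contra hins
            have : i ∈ sᶜ := Finset.mem_compl.mpr hins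
            rw [Finset.card_eq_zero.mp h0] at this
            exact absurd this (Finset.notMem_empty i)
          have heq : (fun i => if i ∈ s then w i else v i)
              = (1 : Matrix (Fin n) (Fin n) R) := by
            funext i j
            simp [hsu i, hw, Matrix.one_apply, eq_comm]
          rw [heq]
          exact Matrix.det_one
        · obtain ⟨a, ha⟩ := Finset.card_eq_one.mp h1
          have hmem : a ∉ s := by
            have : a ∈ sᶜ := ha ▸ Finset.mem_singleton_self a
            exact Finset.mem_compl.mp this
          have heq : (fun i => if i ∈ s then w i else v i)
              = (1 : Matrix (Fin n) (Fin n) R).updateRow a (fun _ => 1) := by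
            funext i j
            by_cases h : i = a
            · subst h
              simp [hmem, hv]
            · have his : i ∈ s := by
                by_contra hins
                have : i ∈ sᶜ := Finset.mem_compl.mpr hins
                rw [ha] at this
                exact h (Finset.mem_singleton.mp this)
              simp [his, Matrix.updateRow_ne h, hw, Matrix.one_apply, eq_comm]
          rw [heq]
          exact det_updateRow_one a fun _ => (1:R)
      rw [hdet1, mul_one]
    · rw [if_neg hs]
      obtain ⟨i, hi, j, hj, hij⟩ := Finset.one_lt_card.mp (show 1 < sᶜ.card by omega)
      have hieq : s.piecewise u v i = s.piecewise u v j := by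
        rw [Finset.piecewise_eq_of_notMem _ _ _ (Finset.mem_compl.mp hi),
          Finset.piecewise_eq_of_notMem _ _ _ (Finset.mem_compl.mp hj)]
      exact (Matrix.detRowAlternating).map_eq_zero_of_eq _ hieq hij
  simp only [hterm]
  rw [Fintype.sum_equiv (⟨compl, compl, compl_compl, compl_compl⟩ :
      Finset (Fin n) ≃ Finset (Fin n))
    _ (fun t => if t.card ≤ 1 then ∏ i ∈ tᶜ, (d i - 1) else 0)
    (fun s => by simp)]
  have hfilter : (Finset.univ : Finset (Finset (Fin n))).filter (fun t => t.card ≤ 1)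
      = insert ∅ (Finset.univ.image fun i : Fin n => {i}) := by
    ext t
    simp only [Finset.mem_filter, Finset.mem_univ, true_and, Finset.mem_insert,
      Finset.mem_image]
    rw [Nat.le_one_iff_eq_zero_or_eq_one, Finset.card_eq_zero, Finset.card_eq_one]
    simp [eq_comm]
  rw [← Finset.sum_filter, hfilter, Finset.sum_insert (by simp),
    Finset.sum_image (fun a _ b _ h => Finset.singleton_injective h)]
  simp [Finset.compl_singleton]


section
variable {F : Type*} [Field F] [Fintype F]

lemma card_split {α : Type*} [Fintype α] (P Q : α → Prop) :
    Nat.card {x : α // P x ∧ Q x} + Nat.card {x : α // P x ∧ ¬ Q x}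
      = Nat.card {x : α // P x} := by
  classical
  simp only [Nat.card_eq_fintype_card, Fintype.card_subtype]
  rw [← Finset.filter_filter, ← Finset.filter_filter]
  exact Finset.card_filter_add_card_filter_not _

lemma card_units' (F : Type*) [Field F] [Fintype F] : Nat.card {x : F // x ≠ 0} = Fintype.card F - 1 := by
  classical
  rw [Nat.card_eq_fintype_card]
  have : Fintype.card {x : F // ¬ x = 0} = Fintype.card F - Fintype.card {x : F // x = 0} :=
    Fintype.card_subtype_compl _
  simpa [Fintype.card_subtype_eq] using this

lemma card_pi_pred {n : ℕ} (p : Fin n → F → Prop) :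
    Nat.card {e : Fin n → F // ∀ i, p i (e i)}
      = ∏ i, Nat.card {x : F // p i x} := by
  classical
  rw [Nat.card_congr (Equiv.subtypePiEquivPi)]
  rw [Nat.card_pi]

lemma card_all_ne {n : ℕ} :
    Nat.card {e : Fin n → F // ∀ i, e i ≠ 0} = (Fintype.card F - 1) ^ n := by
  rw [card_pi_pred (fun _ x => x ≠ 0)]
  simp [card_units' F]

/-- tuples of nonzero elements summing to -1 -/
lemma card_snoc_equiv {n : ℕ} :
    Nat.card {x : Fin (n+1) → F // (∀ i, x i ≠ 0) ∧ ∑ i, x i = -1}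
      = Nat.card {y : Fin n → F // (∀ i, y i ≠ 0) ∧ ∑ i, y i ≠ -1} := by
  apply Nat.card_congr
  refine Equiv.symm ⟨fun y => ⟨Fin.snoc y.1 (-1 - ∑ i, y.1 i), ?_, ?_⟩,
    fun x => ⟨Fin.init x.1, fun i => ?_, ?_⟩, ?_, ?_⟩
  · intro i
    refine Fin.lastCases ?_ (fun j => ?_) i
    · rw [Fin.snoc_last]
      intro h
      exact y.2.2 (by linear_combination -h)
    · rw [Fin.snoc_castSucc]
      exact y.2.1 j
  · rw [Fin.sum_univ_castSucc]
    simp [Fin.snoc_castSucc, Fin.snoc_last]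
  · exact x.2.1 _
  · -- sum of init ≠ -1
    have hsum := x.2.2
    rw [Fin.sum_univ_castSucc] at hsum
    intro h
    have : x.1 (Fin.last n) = 0 := by
      have : ∑ i : Fin n, Fin.init x.1 i = ∑ i : Fin n, x.1 i.castSucc := rfl
      rw [this] at h
      linear_combination hsum - h
    exact x.2.1 _ this
  · intro y
    apply Subtype.ext
    simp [Fin.init_snoc]
  · intro x
    apply Subtype.ext
    have hsum := x.2.2
    rw [Fin.sum_univ_castSucc] at hsum
    have hlast : -1 - ∑ i : Fin n, Fin.init x.1 i = x.1 (Fin.last n) := by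
      have h2 : ∑ i : Fin n, Fin.init x.1 i = ∑ i : Fin n, x.1 i.castSucc := rfl
      rw [h2]
      linear_combination -hsum
    show Fin.snoc (Fin.init x.1) (-1 - ∑ i : Fin n, Fin.init x.1 i) = x.1
    rw [hlast]
    exact Fin.snoc_init_self _
end


section
variable {F : Type*} [Field F] [Fintype F]

lemma cast_card_sub_one : ((Fintype.card F - 1 : ℕ) : ℚ) = (Fintype.card F : ℚ) - 1 := by
  rw [Nat.cast_sub Fintype.card_pos, Nat.cast_one]

lemma card_S (n : ℕ) :
    (Nat.card {x : Fin n → F // (∀ i, x i ≠ 0) ∧ ∑ i, x i = -1} : ℚ) * (Fintype.card F : ℚ)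
      = ((Fintype.card F : ℚ) - 1) ^ n - (-1 : ℚ) ^ n := by
  induction n with
  | zero =>
    have : IsEmpty {x : Fin 0 → F // (∀ i, x i ≠ 0) ∧ ∑ i, x i = -1} := by
      refine ⟨fun x => ?_⟩
      have h := x.2.2
      simp only [Finset.univ_eq_empty, Finset.sum_empty] at h
      exact absurd h.symm (neg_ne_zero.mpr one_ne_zero)
    rw [Nat.card_of_isEmpty]
    simp
  | succ n ih =>
    have hsplit : (Nat.card {x : Fin n → F // (∀ i, x i ≠ 0) ∧ ∑ i, x i = -1} : ℚ)
        + (Nat.card {x : Fin n → F // (∀ i, x i ≠ 0) ∧ ∑ i, x i ≠ -1} : ℚ)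
        = ((Fintype.card F : ℚ) - 1) ^ n := by
      have hnat := (card_split (fun x : Fin n → F => ∀ i, x i ≠ 0)
        (fun x => ∑ i, x i = -1)).trans (card_all_ne (F := F))
      rw [← cast_card_sub_one]
      exact_mod_cast hnat
    rw [card_snoc_equiv]
    linear_combination (Fintype.card F : ℚ) * hsplit - ih

lemma card_T (n : ℕ) :
    (Nat.card {x : Fin n → F // (∀ i, x i ≠ 0) ∧ ∑ i, x i ≠ -1} : ℚ) * (Fintype.card F : ℚ)
      = ((Fintype.card F : ℚ) - 1) ^ (n + 1) + (-1 : ℚ) ^ n := by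
  have hsplit : (Nat.card {x : Fin n → F // (∀ i, x i ≠ 0) ∧ ∑ i, x i = -1} : ℚ)
      + (Nat.card {x : Fin n → F // (∀ i, x i ≠ 0) ∧ ∑ i, x i ≠ -1} : ℚ)
      = ((Fintype.card F : ℚ) - 1) ^ n := by
    have hnat := (card_split (fun x : Fin n → F => ∀ i, x i ≠ 0)
      (fun x => ∑ i, x i = -1)).trans (card_all_ne (F := F))
    rw [← cast_card_sub_one]
    exact_mod_cast hnat
  linear_combination (Fintype.card F : ℚ) * hsplit - card_S (F := F) n

lemma g_ne_iff {n : ℕ} (e : Fin n → F) :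
    (∏ i, e i) + (∑ i, ∏ j ∈ Finset.univ.erase i, e j) ≠ 0
      ↔ ((∃ i, e i = 0 ∧ ∀ j, j ≠ i → e j ≠ 0)
        ∨ ((∀ i, e i ≠ 0) ∧ ∑ i, (e i)⁻¹ ≠ -1)) := by
  classical
  by_cases hall : ∀ i, e i ≠ 0
  · have hprod : ∏ i, e i ≠ 0 := Finset.prod_ne_zero_iff.mpr (fun i _ => hall i)
    have hterm : ∀ i, ∏ j ∈ Finset.univ.erase i, e j = (∏ j, e j) * (e i)⁻¹ := by
      intro i
      rw [eq_comm, mul_inv_eq_iff_eq_mul₀ (hall i), mul_comm (∏ j ∈ Finset.univ.erase i, e j)]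
      rw [eq_comm, mul_comm]
      exact Finset.prod_erase_mul _ _ (Finset.mem_univ i)
    have hg : (∏ i, e i) + (∑ i, ∏ j ∈ Finset.univ.erase i, e j)
        = (∏ i, e i) * (1 + ∑ i, (e i)⁻¹) := by
      rw [Finset.sum_congr rfl (fun i _ => hterm i), ← Finset.mul_sum]; ring
    rw [hg]
    constructor
    · intro h
      refine Or.inr ⟨hall, fun hs => h ?_⟩
      rw [hs]; ring
    · rintro (⟨i, hi, -⟩ | ⟨-, hs⟩)
      · exact absurd hi (hall i)
      · intro h
        rcases mul_eq_zero.mp h with h1 | h2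
        · exact hprod h1
        · exact hs (by linear_combination h2)
  · push_neg at hall
    obtain ⟨i, hi⟩ := hall
    have hprod0 : ∏ j, e j = 0 := Finset.prod_eq_zero (Finset.mem_univ i) hi
    by_cases h2 : ∃ k, k ≠ i ∧ e k = 0
    · obtain ⟨k, hk, hek⟩ := h2
      apply iff_of_false
      · intro h
        apply h
        have hzero : ∀ l, ∏ j ∈ Finset.univ.erase l, e j = 0 := by
          intro l
          rcases ne_or_eq l i with hli | hli
          · exact Finset.prod_eq_zero (Finset.mem_erase.mpr ⟨Ne.symm hli, Finset.mem_univ i⟩) hi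
          · exact Finset.prod_eq_zero
              (Finset.mem_erase.mpr ⟨hli ▸ hk, Finset.mem_univ k⟩) hek
        rw [hprod0, Finset.sum_congr rfl fun l _ => hzero l]
        simp
      · rintro (⟨i', hi', hall'⟩ | ⟨hall', -⟩)
        · rcases ne_or_eq i i' with h | h
          · exact hall' i h hi
          · exact hall' k (h ▸ hk) hek
        · exact hall' i hi
    · push_neg at h2
      have hok : ∀ j, j ≠ i → e j ≠ 0 := fun j hj => h2 j hj
      apply iff_of_true
      · have hsum : (∑ l, ∏ j ∈ Finset.univ.erase l, e j) = ∏ j ∈ Finset.univ.erase i, e j := by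
          apply Finset.sum_eq_single
          · intro l _ hl
            exact Finset.prod_eq_zero (Finset.mem_erase.mpr ⟨Ne.symm hl, Finset.mem_univ i⟩) hi
          · intro h; exact absurd (Finset.mem_univ i) h
        rw [hprod0, hsum, zero_add]
        exact Finset.prod_ne_zero_iff.mpr fun j hj => hok j (Finset.mem_erase.mp hj).1
      · exact Or.inl ⟨i, hi, hok⟩

lemma card_one_zero {n : ℕ} :
    Nat.card {e : Fin n → F // ∃ i, e i = 0 ∧ ∀ j, j ≠ i → e j ≠ 0}
      = n * (Fintype.card F - 1) ^ (n - 1) := by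
  classical
  rw [Nat.card_eq_fintype_card, Fintype.card_subtype]
  have hsplit : (Finset.univ.filter
        fun e : Fin n → F => ∃ i, e i = 0 ∧ ∀ j, j ≠ i → e j ≠ 0)
      = Finset.univ.biUnion fun i : Fin n =>
          Finset.univ.filter fun e : Fin n → F => e i = 0 ∧ ∀ j, j ≠ i → e j ≠ 0 := by
    ext e
    simp [Finset.mem_biUnion]
  rw [hsplit, Finset.card_biUnion]
  · have hcard : ∀ i : Fin n,
        (Finset.univ.filter fun e : Fin n → F => e i = 0 ∧ ∀ j, j ≠ i → e j ≠ 0).card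
          = (Fintype.card F - 1) ^ (n - 1) := by
      intro i
      have : (Finset.univ.filter fun e : Fin n → F => e i = 0 ∧ ∀ j, j ≠ i → e j ≠ 0).card
          = Nat.card {e : Fin n → F // ∀ j, (if j = i then e j = 0 else e j ≠ 0)} := by
        rw [Nat.card_eq_fintype_card, Fintype.card_subtype]
        congr 1
        apply Finset.filter_congr
        intro e _
        constructor
        · rintro ⟨h0, hne⟩ j
          by_cases hj : j = i
          · simpa [hj] using (hj ▸ h0)
          · simpa [hj] using hne j hj
        · intro h
          refine ⟨by simpa using h i, fun j hj => by simpa [hj] using h j⟩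
      rw [this, card_pi_pred (fun j x => if j = i then x = 0 else x ≠ 0)]
      have hval : ∀ j : Fin n, Nat.card {x : F // if j = i then x = 0 else x ≠ 0}
          = if j = i then 1 else Fintype.card F - 1 := by
        intro j
        by_cases hj : j = i
        · rw [if_pos hj]
          rw [Nat.card_congr (Equiv.subtypeEquivRight (q := fun x : F => x = 0)
            (fun x => by simp [hj]))]
          exact Nat.card_unique
        · rw [if_neg hj]
          rw [Nat.card_congr (Equiv.subtypeEquivRight (q := fun x : F => x ≠ 0)
            (fun x => by simp [hj]))]
          exact card_units' F
      rw [Finset.prod_congr rfl fun j _ => hval j]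
      rw [← Finset.mul_prod_erase _ _ (Finset.mem_univ i), if_pos rfl, one_mul]
      rw [Finset.prod_congr rfl (fun j hj => if_neg (Finset.mem_erase.mp hj).1),
        Finset.prod_const, Finset.card_erase_of_mem (Finset.mem_univ i), Finset.card_univ,
        Fintype.card_fin]
    rw [Finset.sum_congr rfl fun i _ => hcard i, Finset.sum_const, Finset.card_univ,
      Fintype.card_fin, smul_eq_mul]
  · intro i _ i' _ hii'
    apply Finset.disjoint_left.mpr
    intro e he he'
    rw [Finset.mem_filter] at he he'
    exact he'.2.2 i hii' he.2.1
end

lemma card_inv_eq {F : Type*} [Field F] [Fintype F] {n : ℕ} :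
    Nat.card {e : Fin n → F // (∀ i, e i ≠ 0) ∧ ∑ i, (e i)⁻¹ ≠ -1}
      = Nat.card {x : Fin n → F // (∀ i, x i ≠ 0) ∧ ∑ i, x i ≠ -1} := by
  apply Nat.card_congr
  refine ⟨fun e => ⟨fun i => (e.1 i)⁻¹, fun i => inv_ne_zero (e.2.1 i), e.2.2⟩,
    fun x => ⟨fun i => (x.1 i)⁻¹, fun i => inv_ne_zero (x.2.1 i), ?_⟩, ?_, ?_⟩
  · simpa [inv_inv] using x.2.2
  · intro e; apply Subtype.ext; funext i; exact inv_inv _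
  · intro x; apply Subtype.ext; funext i; exact inv_inv _

lemma card_or_split {α : Type*} [Fintype α] (P Q : α → Prop)
    (h : ∀ x, P x → Q x → False) :
    Nat.card {x : α // P x ∨ Q x} = Nat.card {x : α // P x} + Nat.card {x : α // Q x} := by
  classical
  simp only [Nat.card_eq_fintype_card, Fintype.card_subtype]
  rw [Finset.filter_or, Finset.card_union_of_disjoint]
  apply Finset.disjoint_left.mpr
  intro x hx hx'
  exact h x (Finset.mem_filter.mp hx).2 (Finset.mem_filter.mp hx').2

/-- The number of invertible Schrödinger operators of the complete graph `K_n`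
over the finite field `F` with `q` elements equals
`((q-1)^(n+1) + (-1)^n)/q + n*(q-1)^(n-1)`. -/
theorem stmt_0 (F : Type*) [Field F] [Fintype F] (n : ℕ) (hn : 1 ≤ n) :
    (Nat.card {d : Fin n → F //
        (Matrix.of fun i j => if i = j then d i else 1).det ≠ 0} : ℚ)
      = (((Fintype.card F : ℚ) - 1) ^ (n + 1) + (-1) ^ n) / (Fintype.card F : ℚ)
        + n * ((Fintype.card F : ℚ) - 1) ^ (n - 1) := by
  classical
  have hq : (Fintype.card F : ℚ) ≠ 0 := Nat.cast_ne_zero.mpr Fintype.card_ne_zero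
  have hchange : Nat.card {d : Fin n → F //
        (Matrix.of fun i j => if i = j then d i else 1).det ≠ 0}
      = Nat.card {e : Fin n → F //
          (∃ i, e i = 0 ∧ ∀ j, j ≠ i → e j ≠ 0)
            ∨ ((∀ i, e i ≠ 0) ∧ ∑ i, (e i)⁻¹ ≠ -1)} := by
    apply Nat.card_congr
    refine Equiv.subtypeEquiv (Equiv.piCongrRight fun _ => Equiv.subRight (1 : F)) ?_
    intro d
    rw [det_formula]
    have : ∀ i, (Equiv.piCongrRight fun _ : Fin n => Equiv.subRight (1 : F)) d i
        = d i - 1 := fun i => rfl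
    rw [show ((Equiv.piCongrRight fun _ : Fin n => Equiv.subRight (1 : F)) d)
        = fun i => d i - 1 from funext this] at *
    exact g_ne_iff (fun i => d i - 1)
  rw [hchange, card_or_split _ _ (by
    rintro e ⟨i, hi, -⟩ ⟨hall, -⟩
    exact hall i hi), card_one_zero, card_inv_eq]
  have hT := card_T (F := F) n
  have : (Nat.card {x : Fin n → F // (∀ i, x i ≠ 0) ∧ ∑ i, x i ≠ -1} : ℚ)
      = (((Fintype.card F : ℚ) - 1) ^ (n + 1) + (-1 : ℚ) ^ n) / (Fintype.card F : ℚ) := by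
    rw [eq_div_iff hq]; exact hT
  push_cast [cast_card_sub_one (F := F)]
  rw [this]
  ring

end SchroAux
end

section
/- Let q be a prime power and n ≥ 2. The number of diagonal perturbations (d_1,...,d_n) ∈ F_q^n such that the adjacency matrix of the star graph with one center and n-1 leaves plus diag(d_1,...,d_n) is invertible over F_q equals (q² + (n-3)q + 1)(q-1)^(n-2). -/
set_option linter.unusedSectionVars false
namespace Star4
open Finset
variable {F : Type*} [Field F] [Fintype F]

def starM (m : ℕ) (v : Fin (m+1) → F) : Matrix (Fin (m+1)) (Fin (m+1)) F :=
  Matrix.of fun i j => if i = j then v i else if i = 0 ∨ j = 0 then 1 else 0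

lemma detB (m : ℕ) (v : Fin (m+2) → F) :
    ((starM (m+1) v).submatrix Fin.castSucc Fin.succ).det
      = (-1)^m * ∏ i : Fin m, v i.succ.castSucc := by
  rw [Matrix.det_succ_column _ (Fin.last m)]
  rw [Fintype.sum_eq_single (0 : Fin (m+1))]
  · have e1 : ((starM (m+1) v).submatrix Fin.castSucc Fin.succ) 0 (Fin.last m) = 1 := by
      have : (Fin.castSucc (0 : Fin (m+1))) ≠ (Fin.last m).succ := by
        simp [Fin.ext_iff]
      simp [starM, this]
    rw [e1]
    have e2 : (((starM (m+1) v).submatrix Fin.castSucc Fin.succ).submatrix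
        (Fin.succAbove 0) (Fin.last m).succAbove).det = ∏ i : Fin m, v i.succ.castSucc := by
      rw [Fin.succAbove_zero, Fin.succAbove_last]
      have : (((starM (m+1) v).submatrix Fin.castSucc Fin.succ).submatrix Fin.succ Fin.castSucc)
          = Matrix.diagonal (fun i : Fin m => v i.succ.castSucc) := by
        ext i j
        by_cases h : i = j
        · subst h
          simp [starM, Matrix.diagonal, Fin.succ_castSucc, -Fin.castSucc_succ]
        · have h1 : (i.succ.castSucc : Fin (m+2)) ≠ (j.castSucc).succ := by
            rw [Fin.succ_castSucc]
            simp [Fin.ext_iff]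
            omega
          have h2 : (i.succ.castSucc : Fin (m+2)) ≠ 0 := by simp [Fin.ext_iff]
          have h3 : ((j.castSucc).succ : Fin (m+2)) ≠ 0 := Fin.succ_ne_zero _
          simp [starM, Matrix.diagonal, h1, h2, h3, h]
      rw [this, Matrix.det_diagonal]
    rw [e2]
    simp [Fin.val_last]
  · intro b hb
    have e0 : ((starM (m+1) v).submatrix Fin.castSucc Fin.succ) b (Fin.last m) = 0 := by
      have h1 : (b.castSucc : Fin (m+2)) ≠ (Fin.last m).succ := by
        simp [Fin.ext_iff]; omega
      have h2 : (b.castSucc : Fin (m+2)) ≠ 0 := by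
        simpa [Fin.castSucc_eq_zero_iff] using hb
      have h3 : ((Fin.last m).succ : Fin (m+2)) ≠ 0 := Fin.succ_ne_zero _
      have h4 : (b.castSucc : Fin (m+2)) ≠ Fin.last (m+1) := (Fin.castSucc_lt_last b).ne
      simp [starM, h1, h2, h3, h4]
    rw [e0, mul_zero, zero_mul]

theorem starM_det (m : ℕ) (v : Fin (m+1) → F) :
    (starM m v).det = v 0 * ∏ i : Fin m, v i.succ
      - ∑ j : Fin m, ∏ i ∈ univ.erase j, v i.succ := by
  induction m with
  | zero => simp [starM, Matrix.det_fin_one]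
  | succ m ih =>
    rw [Matrix.det_succ_row (starM (m+1) v) (Fin.last (m+1))]
    rw [Fin.sum_univ_succ, Fin.sum_univ_castSucc]
    have hz : ∀ j : Fin m, ((-1:F) ^ ((Fin.last (m+1) : ℕ) + ((j.castSucc.succ : Fin (m+2)) : ℕ))
        * starM (m+1) v (Fin.last (m+1)) j.castSucc.succ
        * ((starM (m+1) v).submatrix (Fin.last (m+1)).succAbove j.castSucc.succ.succAbove).det) = 0 := by
      intro j
      have h1 : Fin.last (m+1) ≠ j.castSucc.succ := by
        simp [Fin.ext_iff, Fin.val_last]; omega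
      have h2 : (j.castSucc.succ : Fin (m+2)) ≠ 0 := Fin.succ_ne_zero _
      have h3 : (Fin.last (m+1) : Fin (m+2)) ≠ 0 := by
        simp [Fin.ext_iff, Fin.val_last]
      have e0 : starM (m+1) v (Fin.last (m+1)) j.castSucc.succ = 0 := by
        simp [starM, h1, h2, h3]
      rw [e0, mul_zero, zero_mul]
    rw [Finset.sum_congr rfl (fun j _ => hz j), Finset.sum_const_zero]
    -- helper set identities
    have erase_last : (univ : Finset (Fin (m+1))).erase (Fin.last m)
        = Finset.image Fin.castSucc univ := by
      ext i
      simp [Fin.exists_castSucc_eq, eq_comm]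
    have erase_cs : ∀ j : Fin m, (univ : Finset (Fin (m+1))).erase (Fin.castSucc j)
        = insert (Fin.last m) (Finset.image Fin.castSucc (univ.erase j)) := by
      intro j
      ext i
      constructor
      · intro hi
        have hij : i ≠ Fin.castSucc j := (Finset.mem_erase.mp hi).1
        by_cases hl : i = Fin.last m
        · simp [hl]
        · obtain ⟨k, hk⟩ := Fin.exists_castSucc_eq.mpr hl
          have : k ≠ j := fun h => hij (h ▸ hk.symm)
          simp only [Finset.mem_insert, Finset.mem_image]
          exact Or.inr ⟨k, by simp [this, hk]⟩
      · intro hi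
        rcases Finset.mem_insert.mp hi with hl | hm
        · subst hl
          exact Finset.mem_erase.mpr ⟨(Fin.castSucc_lt_last j).ne', Finset.mem_univ _⟩
        · obtain ⟨k, hk, rfl⟩ := Finset.mem_image.mp hm
          have : k ≠ j := (Finset.mem_erase.mp hk).1
          exact Finset.mem_erase.mpr ⟨by simpa [Fin.castSucc_inj] using this, Finset.mem_univ _⟩
    -- the two surviving cofactor terms
    have e01 : starM (m+1) v (Fin.last (m+1)) 0 = 1 := by
      have h3 : (Fin.last (m+1) : Fin (m+2)) ≠ 0 := by
        simp [Fin.ext_iff, Fin.val_last]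
      simp [starM, h3]
    have eLL : starM (m+1) v (Fin.last (m+1)) (Fin.last m).succ = v (Fin.last (m+1)) := by
      rw [Fin.succ_last]
      simp [starM]
    have minor0 : ((starM (m+1) v).submatrix (Fin.last (m+1)).succAbove (Fin.succAbove 0)).det
        = (-1:F)^m * ∏ i : Fin m, v i.succ.castSucc := by
      rw [Fin.succAbove_last, Fin.succAbove_zero, detB]
    have minorL : ((starM (m+1) v).submatrix (Fin.last (m+1)).succAbove (Fin.last m).succ.succAbove).det
        = v 0 * ∏ i : Fin m, v i.succ.castSucc
          - ∑ j : Fin m, ∏ i ∈ univ.erase j, v i.succ.castSucc := by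
      rw [Fin.succ_last, Fin.succAbove_last]
      have hsub : ((starM (m+1) v).submatrix Fin.castSucc Fin.castSucc)
          = starM m (v ∘ Fin.castSucc) := by
        ext i j
        simp only [starM, Matrix.submatrix_apply, Matrix.of_apply, Function.comp,
          Fin.castSucc_inj, Fin.castSucc_eq_zero_iff]
      rw [hsub, ih]
      simp [Fin.succ_castSucc, -Fin.castSucc_succ]
    rw [e01, eLL, minor0, minorL,
      Fin.sum_univ_castSucc (f := fun j : Fin (m+1) => ∏ i ∈ univ.erase j, v i.succ),
      Fin.prod_univ_castSucc (f := fun i : Fin (m+1) => v i.succ)]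
    have hEL : ∏ i ∈ (univ : Finset (Fin (m+1))).erase (Fin.last m), v i.succ
        = ∏ i : Fin m, v i.succ.castSucc := by
      rw [erase_last, Finset.prod_image (fun x _ y _ h => Fin.castSucc_injective _ h)]
      simp [Fin.succ_castSucc, -Fin.castSucc_succ]
    have hEC : ∀ j : Fin m, ∏ i ∈ (univ : Finset (Fin (m+1))).erase (Fin.castSucc j), v i.succ
        = v (Fin.last (m+1)) * ∏ i ∈ univ.erase j, v i.succ.castSucc := by
      intro j
      rw [erase_cs j, Finset.prod_insert (by
        simp only [Finset.mem_image]
        rintro ⟨k, -, hk⟩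
        exact (Fin.castSucc_lt_last k).ne hk),
        Finset.prod_image (fun x _ y _ h => Fin.castSucc_injective _ h)]
      rw [Fin.succ_last]
      simp [Fin.succ_castSucc, -Fin.castSucc_succ]
    rw [hEL, Finset.sum_congr rfl (fun j _ => hEC j), ← Finset.mul_sum]
    have hval : ((Fin.last (m+1) : Fin (m+2)) : ℕ) = m + 1 := rfl
    have hv0 : ((0 : Fin (m+2)) : ℕ) = 0 := rfl
    have hvL : (((Fin.last m).succ : Fin (m+2)) : ℕ) = m + 1 := by
      rw [Fin.succ_last]; rfl
    rw [hval, hv0, hvL]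
    have hsgn : ((-1 : F) ^ (m + 1 + 0)) * 1 * ((-1:F)^m * ∏ i : Fin m, v i.succ.castSucc)
        = - ∏ i : Fin m, v i.succ.castSucc := by
      rw [mul_one, ← mul_assoc, ← pow_add]
      have h2 : (-1 : F) ^ (m + 1 + 0 + m) = -1 := by
        rw [show m + 1 + 0 + m = 2*m + 1 by ring, pow_succ, pow_mul]
        simp
      rw [h2]; ring
    rw [hsgn]
    have hone : (-1 : F) ^ (m + 1 + (m + 1)) = 1 := by
      rw [show m + 1 + (m+1) = 2*(m+1) by ring, pow_mul]
      simp
    rw [hone]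
    have hlast : v (Fin.last m).succ = v (Fin.last (m+1)) := by rw [Fin.succ_last]
    rw [hlast]
    simp only [Fin.succ_castSucc]
    ring


lemma card_ne (a : F) : Nat.card {c : F // c ≠ a} = Fintype.card F - 1 := by
  classical
  rw [Nat.card_eq_fintype_card]
  have := Fintype.card_subtype_compl (fun c : F => c = a)
  simp only [Fintype.card_subtype_eq] at this
  convert this using 2

lemma card_cond_ne (P S : F) (hP : P ≠ 0) :
    Nat.card {c : F // c * P - S ≠ 0} = Fintype.card F - 1 := by
  classical
  have : ∀ c : F, (c * P - S ≠ 0) ↔ c ≠ S * P⁻¹ := by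
    intro c
    rw [sub_ne_zero]
    exact not_congr (by rw [eq_mul_inv_iff_mul_eq₀ hP])
  rw [Nat.card_congr (Equiv.subtypeEquivRight this)]
  exact card_ne _

lemma card_cond_all (P S : F) (hP : P = 0) (hS : S ≠ 0) :
    Nat.card {c : F // c * P - S ≠ 0} = Fintype.card F := by
  classical
  have : ∀ c : F, (c * P - S ≠ 0) ↔ True := by
    intro c; subst hP; simpa using hS
  rw [Nat.card_congr (Equiv.subtypeEquivRight this)]
  rw [Nat.card_congr (Equiv.subtypeUnivEquiv (fun _ => trivial))]
  exact Nat.card_eq_fintype_card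

lemma card_cond_none (P S : F) (hP : P = 0) (hS : S = 0) :
    Nat.card {c : F // c * P - S ≠ 0} = 0 := by
  classical
  subst hP; subst hS
  simp [Nat.card_eq_zero]

lemma card_pi_ne (m : ℕ) : Nat.card {w : Fin m → F // ∀ i, w i ≠ 0}
    = (Fintype.card F - 1) ^ m := by
  classical
  rw [Nat.card_congr (Equiv.subtypePiEquivPi (p := fun (_ : Fin m) (x : F) => x ≠ 0))]
  rw [Nat.card_pi]
  simp [card_ne (0 : F)]

lemma card_one_zero (m : ℕ) (j : Fin m) :
    Nat.card {w : Fin m → F // ∀ i, (if i = j then w i = 0 else w i ≠ 0)}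
      = (Fintype.card F - 1) ^ (m - 1) := by
  classical
  rw [Nat.card_congr (Equiv.subtypePiEquivPi
    (p := fun (i : Fin m) (x : F) => if i = j then x = 0 else x ≠ 0))]
  rw [Nat.card_pi]
  rw [← Finset.mul_prod_erase univ _ (mem_univ j)]
  have h1 : Nat.card {x : F // if j = j then x = 0 else x ≠ 0} = 1 := by
    rw [Nat.card_congr (Equiv.subtypeEquivRight (q := fun x : F => x = 0) (fun x => by simp))]
    rw [Nat.card_eq_fintype_card, Fintype.card_subtype_eq]
  have h2 : ∀ i ∈ univ.erase j, Nat.card {x : F // if i = j then x = 0 else x ≠ 0}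
      = Fintype.card F - 1 := by
    intro i hi
    have : i ≠ j := (Finset.mem_erase.mp hi).1
    rw [Nat.card_congr (Equiv.subtypeEquivRight (q := fun x : F => x ≠ 0) (fun x => by simp [this]))]
    exact card_ne 0
  rw [h1, one_mul, Finset.prod_congr rfl h2, Finset.prod_const, Finset.card_erase_of_mem (mem_univ j)]
  simp

lemma countPairs (m : ℕ) :
    Nat.card {p : (Fin m → F) × F //
        p.2 * (∏ i, p.1 i) - (∑ j : Fin m, ∏ i ∈ univ.erase j, p.1 i) ≠ 0}
      = (Fintype.card F - 1) ^ (m + 1)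
        + m * Fintype.card F * (Fintype.card F - 1) ^ (m - 1) := by
  classical
  set q := Fintype.card F with hq
  set P : (Fin m → F) → F := fun w => ∏ i, w i with hP
  set S : (Fin m → F) → F := fun w => ∑ j : Fin m, ∏ i ∈ univ.erase j, w i with hS
  set N : (Fin m → F) → ℕ := fun w => Nat.card {c : F // c * P w - S w ≠ 0} with hN
  have hcard : Nat.card {p : (Fin m → F) × F // p.2 * P p.1 - S p.1 ≠ 0}
      = ∑ w : Fin m → F, N w := by
    rw [Nat.card_congr (Equiv.subtypeProdEquivSigmaSubtype
      (fun (w : Fin m → F) (c : F) => c * P w - S w ≠ 0))]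
    rw [Nat.card_eq_fintype_card, Fintype.card_sigma]
    exact Finset.sum_congr rfl fun w _ => (Nat.card_eq_fintype_card).symm
  rw [hcard]
  set p0 : (Fin m → F) → Prop := fun w => ∀ i, w i ≠ 0 with hp0
  set c1 : (Fin m → F) → Prop := fun w => ∃ j, w j = 0 ∧ ∀ i, i ≠ j → w i ≠ 0 with hc1
  rw [← Finset.sum_filter_add_sum_filter_not univ p0 N]
  -- part 1 : all coordinates nonzero
  have part1 : ∑ w ∈ univ.filter p0, N w = (q - 1) ^ (m + 1) := by
    have he : ∀ w ∈ univ.filter p0, N w = q - 1 := by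
      intro w hw
      have hw' : p0 w := (Finset.mem_filter.mp hw).2
      exact card_cond_ne _ _ (Finset.prod_ne_zero_iff.mpr fun i _ => hw' i)
    rw [Finset.sum_congr rfl he, Finset.sum_const, smul_eq_mul]
    have : (univ.filter p0).card = (q - 1) ^ m := by
      rw [← Fintype.card_subtype, ← Nat.card_eq_fintype_card]
      exact card_pi_ne m
    rw [this, ← pow_succ]
  rw [part1]
  -- part 2 : at least one zero
  rw [← Finset.sum_filter_add_sum_filter_not (univ.filter fun w => ¬ p0 w) c1 N]
  have hfe : (univ.filter fun w => ¬ p0 w).filter c1 = univ.filter c1 := by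
    ext w
    simp only [Finset.mem_filter, Finset.mem_univ, true_and]
    constructor
    · rintro ⟨-, h⟩; exact h
    · rintro ⟨j, hj, hrest⟩
      refine ⟨fun hall => hall j hj, ⟨j, hj, hrest⟩⟩
  rw [hfe]
  have part3 : ∑ w ∈ (univ.filter fun w => ¬ p0 w).filter fun w => ¬ c1 w, N w = 0 := by
    refine Finset.sum_eq_zero fun w hw => ?_
    simp only [Finset.mem_filter, Finset.mem_univ, true_and] at hw
    obtain ⟨hnp0, hnc1⟩ := hw
    simp only [hp0, not_forall, not_not] at hnp0
    obtain ⟨j1, hj1⟩ := hnp0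
    simp only [hc1, not_exists, not_and, not_forall, not_not] at hnc1
    obtain ⟨j2, hj2ne, hj2⟩ := hnc1 j1 hj1
    refine card_cond_none _ _ ?_ ?_
    · exact Finset.prod_eq_zero (mem_univ j1) hj1
    · refine Finset.sum_eq_zero fun j' _ => ?_
      by_cases h : j' = j1
      · subst h
        exact Finset.prod_eq_zero (Finset.mem_erase.mpr ⟨hj2ne, mem_univ j2⟩) hj2
      · exact Finset.prod_eq_zero (Finset.mem_erase.mpr ⟨Ne.symm h, mem_univ j1⟩) hj1
  rw [part3, add_zero]
  have part2 : ∑ w ∈ univ.filter c1, N w = q * (m * (q - 1) ^ (m - 1)) := by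
    have he : ∀ w ∈ univ.filter c1, N w = q := by
      intro w hw
      obtain ⟨j, hj0, hrest⟩ : c1 w := (Finset.mem_filter.mp hw).2
      have hPw : P w = 0 := Finset.prod_eq_zero (mem_univ j) hj0
      have hSw : S w = ∏ i ∈ univ.erase j, w i := by
        refine Finset.sum_eq_single j (fun j' _ hne => ?_) (fun h => absurd (mem_univ j) h)
        exact Finset.prod_eq_zero (Finset.mem_erase.mpr ⟨Ne.symm hne, mem_univ j⟩) hj0
      have hSne : S w ≠ 0 := by
        rw [hSw]
        exact Finset.prod_ne_zero_iff.mpr fun i hi => hrest i (Finset.mem_erase.mp hi).1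
      exact card_cond_all _ _ hPw hSne
    rw [Finset.sum_congr rfl he, Finset.sum_const, smul_eq_mul]
    have hbi : univ.filter c1 = univ.biUnion
        (fun j : Fin m => univ.filter (fun w : Fin m → F => w j = 0 ∧ ∀ i, i ≠ j → w i ≠ 0)) := by
      ext w
      simp [hc1]
    have hdisj : ∀ x ∈ (univ : Finset (Fin m)), ∀ y ∈ (univ : Finset (Fin m)), x ≠ y →
        Disjoint (univ.filter (fun w : Fin m → F => w x = 0 ∧ ∀ i, i ≠ x → w i ≠ 0))
          (univ.filter (fun w : Fin m → F => w y = 0 ∧ ∀ i, i ≠ y → w i ≠ 0)) := by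
      intro x _ y _ hxy
      rw [Finset.disjoint_left]
      intro w hwx hwy
      obtain ⟨hx0, -⟩ := (Finset.mem_filter.mp hwx).2
      obtain ⟨-, hy⟩ := (Finset.mem_filter.mp hwy).2
      exact hy x hxy hx0
    have hcards : ∀ j : Fin m,
        (univ.filter (fun w : Fin m → F => w j = 0 ∧ ∀ i, i ≠ j → w i ≠ 0)).card
          = (q - 1) ^ (m - 1) := by
      intro j
      rw [← Fintype.card_subtype, ← Nat.card_eq_fintype_card]
      rw [Nat.card_congr (Equiv.subtypeEquivRight
        (q := fun w : Fin m → F => ∀ i, if i = j then w i = 0 else w i ≠ 0) ?_)]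
      · exact card_one_zero m j
      · intro w
        constructor
        · rintro ⟨h0, hr⟩ i
          by_cases h : i = j
          · subst h; simpa using h0
          · simpa [h] using hr i h
        · intro h
          refine ⟨by simpa using h j, fun i hi => by simpa [hi] using h i⟩
    rw [hbi, Finset.card_biUnion hdisj, Finset.sum_congr rfl (fun j _ => hcards j),
      Finset.sum_const, smul_eq_mul, Finset.card_univ, Fintype.card_fin]
    ring
  rw [part2]
  ring


def sumEquiv (m : ℕ) : Fin (m+1) ≃ (Unit ⊕ Fin m) where
  toFun := Fin.cases (Sum.inl ()) Sum.inr
  invFun := Sum.elim (fun _ => 0) Fin.succ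
  left_inv := by
    intro i
    induction i using Fin.cases <;> simp
  right_inv := by rintro (⟨⟩|i) <;> simp

def unpack (m : ℕ) : (Unit ⊕ Fin m → F) ≃ (Fin m → F) × F where
  toFun d := (fun i => d (Sum.inr i), d (Sum.inl ()))
  invFun p := Sum.elim (fun _ => p.2) p.1
  left_inv d := by
    funext x
    cases x with
    | inl u => cases u; rfl
    | inr i => rfl
  right_inv p := rfl

lemma det_eq (m : ℕ) (d : Unit ⊕ Fin m → F) :
    (Matrix.of fun i j =>
        if i = j then d i else if i.isLeft ∨ j.isLeft then (1 : F) else 0).det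
      = d (Sum.inl ()) * ∏ i : Fin m, d (Sum.inr i)
        - ∑ j : Fin m, ∏ i ∈ univ.erase j, d (Sum.inr i) := by
  have hsub : ((Matrix.of fun i j =>
      if i = j then d i else if i.isLeft ∨ j.isLeft then (1 : F) else 0).submatrix
        (sumEquiv m) (sumEquiv m)) = starM m (d ∘ sumEquiv m) := by
    ext i j
    induction i using Fin.cases with
    | zero =>
      induction j using Fin.cases with
      | zero => simp [starM, sumEquiv]
      | succ j => simp [starM, sumEquiv, (Fin.succ_ne_zero j).symm]
    | succ i =>
      induction j using Fin.cases with
      | zero => simp [starM, sumEquiv, Fin.succ_ne_zero i]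
      | succ j =>
        by_cases h : i = j
        · subst h; simp [starM, sumEquiv]
        · have : Fin.succ i ≠ Fin.succ j := by simpa [Fin.succ_inj] using h
          simp [starM, sumEquiv, h, this, Fin.succ_ne_zero]
  rw [← Matrix.det_submatrix_equiv_self (sumEquiv m), hsub, starM_det]
  simp only [Function.comp_apply, sumEquiv, Equiv.coe_fn_mk, Fin.cases_zero, Fin.cases_succ]

end Star4

open Star4 Finset in
/-- The number of invertible Schrödinger operators over `F_q` of the star graph
with one center and `n-1` leaves equals `(q² + (n-3)q + 1)(q-1)^(n-2)`. -/
theorem stmt_4 (F : Type*) [Field F] [Fintype F] (n : ℕ) (hn : 2 ≤ n) :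
    (Nat.card {d : Unit ⊕ Fin (n - 1) → F //
        (Matrix.of fun i j =>
          if i = j then d i else if i.isLeft ∨ j.isLeft then (1 : F) else 0).det ≠ 0} : ℚ)
      = ((Fintype.card F : ℚ) ^ 2 + ((n : ℚ) - 3) * (Fintype.card F : ℚ) + 1)
          * ((Fintype.card F : ℚ) - 1) ^ (n - 2) := by
  obtain ⟨k, rfl⟩ : ∃ k, n = k + 2 := ⟨n - 2, by omega⟩
  have hcount : Nat.card {d : Unit ⊕ Fin (k + 1) → F //
      (Matrix.of fun i j =>
        if i = j then d i else if i.isLeft ∨ j.isLeft then (1 : F) else 0).det ≠ 0}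
      = (Fintype.card F - 1) ^ (k + 2)
        + (k + 1) * Fintype.card F * (Fintype.card F - 1) ^ k := by
    have hiff : ∀ d : Unit ⊕ Fin (k + 1) → F,
        ((Matrix.of fun i j =>
          if i = j then d i else if i.isLeft ∨ j.isLeft then (1 : F) else 0).det ≠ 0) ↔
        (((unpack (k+1)) d).2 * (∏ i, ((unpack (k+1)) d).1 i)
          - (∑ j : Fin (k+1), ∏ i ∈ univ.erase j, ((unpack (k+1)) d).1 i) ≠ 0) := by
      intro d
      rw [det_eq]
      exact Iff.rfl
    rw [Nat.card_congr (Equiv.subtypeEquiv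
      (q := fun p : (Fin (k+1) → F) × F => p.2 * (∏ i, p.1 i)
        - (∑ j : Fin (k+1), ∏ i ∈ univ.erase j, p.1 i) ≠ 0)
      (unpack (F := F) (k+1)) hiff)]
    exact countPairs (k + 1)
  have hq1 : 1 ≤ Fintype.card F := Fintype.card_pos
  simp only [show k + 2 - 2 = k from rfl]
  have hcast : (Nat.card {d : Unit ⊕ Fin (k + 2 - 1) → F //
      (Matrix.of fun i j =>
        if i = j then d i else if i.isLeft ∨ j.isLeft then (1 : F) else 0).det ≠ 0})
      = (Fintype.card F - 1) ^ (k + 2)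
        + (k + 1) * Fintype.card F * (Fintype.card F - 1) ^ k := hcount
  rw [hcast]
  push_cast [Nat.cast_sub hq1]
  ring
end

section
/- Let F_q be a finite field and let U = Σ_{x∈F_q} [matrix (x, 1; -1, 0)] in the group ring Z[SL_2(F_q)]. Then for every odd n ≥ 1, the sum of the coefficients of U^n over all elements of SL_2(F_q) of trace 2 equals (q^(n+1) - 1)/(q² - 1), and the same holds for trace -2. -/
set_option linter.unusedSectionVars false
set_option maxHeartbeats 1000000
open Matrix MonoidAlgebra Finset

/-- The element `(x, 1; -1, 0)` of `SL₂(F)`. -/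
def cycleGen {F : Type*} [Field F] (x : F) : Matrix.SpecialLinearGroup (Fin 2) F :=
  ⟨!![x, 1; -1, 0], by simp [Matrix.det_fin_two_of]⟩

section Aux
variable (F : Type*) [Field F] [Fintype F] [DecidableEq F]
abbrev SL2 := Matrix.SpecialLinearGroup (Fin 2) F
instance : DecidableEq (SL2 F) :=
  fun A B => decidable_of_iff (A.1 = B.1) ⟨fun h => Subtype.ext h, fun h => h ▸ rfl⟩
noncomputable def Ue : MonoidAlgebra ℤ (SL2 F) := ∑ x : F, MonoidAlgebra.single (cycleGen x) 1
variable {F}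

lemma apply_succ (n : ℕ) (g : SL2 F) :
    (Ue F ^ (n+1)).coeff g = ∑ x : F, (Ue F ^ n).coeff (g * (cycleGen x)⁻¹) := by
  rw [pow_succ, Ue, Finset.mul_sum, MonoidAlgebra.coeff_sum, Finsupp.finset_sum_apply]
  exact Finset.sum_congr rfl fun x _ => by
    rw [MonoidAlgebra.coeff_mul_single_apply, mul_one]

lemma step (p : SL2 F → Prop) [DecidablePred p] (n : ℕ) :
    ∑ g ∈ Finset.univ.filter p, (Ue F ^ (n+1)).coeff g
      = ∑ h : SL2 F, (Ue F ^ n).coeff h * ∑ x : F, (if p (h * cycleGen x) then 1 else 0) := by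
  calc ∑ g ∈ Finset.univ.filter p, (Ue F ^ (n+1)).coeff g
      = ∑ g ∈ Finset.univ.filter p, ∑ x : F, (Ue F ^ n).coeff (g * (cycleGen x)⁻¹) :=
        Finset.sum_congr rfl fun g _ => apply_succ n g
    _ = ∑ x : F, ∑ g ∈ Finset.univ.filter p, (Ue F ^ n).coeff (g * (cycleGen x)⁻¹) :=
        Finset.sum_comm
    _ = ∑ x : F, ∑ h ∈ Finset.univ.filter (fun h => p (h * cycleGen x)), (Ue F ^ n).coeff h := by
        refine Finset.sum_congr rfl fun x _ => ?_
        refine Finset.sum_equiv (Equiv.mulRight (cycleGen x)⁻¹) (fun g => ?_) (fun g _ => rfl)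
        simp [Equiv.coe_mulRight, mul_assoc]
    _ = ∑ x : F, ∑ h : SL2 F, (if p (h * cycleGen x) then 1 else 0) * (Ue F ^ n).coeff h := by
        refine Finset.sum_congr rfl fun x _ => ?_
        rw [Finset.sum_filter]
        exact Finset.sum_congr rfl fun h _ => by split <;> simp
    _ = ∑ h : SL2 F, (Ue F ^ n).coeff h * ∑ x : F, (if p (h * cycleGen x) then 1 else 0) := by
        rw [Finset.sum_comm]
        exact Finset.sum_congr rfl fun h _ => by
          rw [Finset.mul_sum]
          exact Finset.sum_congr rfl fun x _ => by ring

lemma pow_zero_apply (h : SL2 F) : (Ue F ^ 0).coeff h = if h = 1 then 1 else 0 := by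
  rw [pow_zero, MonoidAlgebra.one_def]
  simp [Finsupp.single_apply, eq_comm]

lemma sum_pow_zero (p : SL2 F → Prop) [DecidablePred p] :
    ∑ g ∈ Finset.univ.filter p, (Ue F ^ 0).coeff g = if p 1 then 1 else 0 := by
  rw [Finset.sum_filter]
  have key : ∀ h : SL2 F, (if p h then (Ue F ^ 0).coeff h else 0)
      = if h = 1 then (if p 1 then 1 else 0) else 0 := by
    intro h
    rw [pow_zero_apply]
    by_cases h1 : h = 1
    · subst h1; simp
    · simp [h1]
  rw [Finset.sum_congr rfl fun h _ => key h]
  rw [Finset.sum_ite_eq' Finset.univ (1 : SL2 F) (fun _ => if p 1 then (1:ℤ) else 0)]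
  simp

lemma mul_cycleGen_coe (h : SL2 F) (x : F) :
    ((h * cycleGen x : SL2 F) : Matrix (Fin 2) (Fin 2) F) =
      !![(h : Matrix (Fin 2) (Fin 2) F) 0 0 * x - (h : Matrix (Fin 2) (Fin 2) F) 0 1,
         (h : Matrix (Fin 2) (Fin 2) F) 0 0;
         (h : Matrix (Fin 2) (Fin 2) F) 1 0 * x - (h : Matrix (Fin 2) (Fin 2) F) 1 1,
         (h : Matrix (Fin 2) (Fin 2) F) 1 0] := by
  change (h : Matrix (Fin 2) (Fin 2) F) * (cycleGen x : Matrix (Fin 2) (Fin 2) F) = _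
  ext i j
  fin_cases i <;> fin_cases j <;>
    simp [cycleGen, Matrix.SpecialLinearGroup.coe_mul, Matrix.mul_apply, Fin.sum_univ_two] <;> ring

lemma det_entries (h : SL2 F) :
    (h : Matrix (Fin 2) (Fin 2) F) 0 0 * (h : Matrix (Fin 2) (Fin 2) F) 1 1
      - (h : Matrix (Fin 2) (Fin 2) F) 0 1 * (h : Matrix (Fin 2) (Fin 2) F) 1 0 = 1 := by
  have := h.2
  rwa [Matrix.det_fin_two] at this

lemma sum_ite_aff (a b t : F) :
    (∑ x : F, if a * x - b = t then (1:ℤ) else 0)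
      = if a = 0 then (if t + b = 0 then (Fintype.card F : ℤ) else 0) else 1 := by
  by_cases ha : a = 0
  · subst ha
    simp only [zero_mul, zero_sub, if_pos rfl]
    by_cases hb : t + b = 0
    · have h1 : -b = t := by linear_combination -hb
      simp [h1, hb]
    · have h1 : ¬ (-b = t) := fun h => hb (by linear_combination -h)
      simp [h1, hb]
  · rw [if_neg ha]
    have key : ∀ x : F, (a * x - b = t) ↔ x = a⁻¹ * (t + b) := by
      intro x
      constructor
      · intro h; field_simp; linear_combination h
      · intro h; subst h; field_simp; ring
    simp only [key]
    simp

/-! ### Counters -/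
variable (F)

noncomputable def cT (n : ℕ) : ℤ := ∑ g : SL2 F, (Ue F ^ n).coeff g
noncomputable def cA (t : F) (n : ℕ) : ℤ :=
  ∑ g ∈ Finset.univ.filter
      (fun g : SL2 F => (g : Matrix (Fin 2) (Fin 2) F) 0 0 = t), (Ue F ^ n).coeff g
noncomputable def cB (s : F) (n : ℕ) : ℤ :=
  ∑ g ∈ Finset.univ.filter
      (fun g : SL2 F => (g : Matrix (Fin 2) (Fin 2) F) 0 0 = 0
        ∧ (g : Matrix (Fin 2) (Fin 2) F) 0 1 = s), (Ue F ^ n).coeff g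
noncomputable def cN (t : F) (n : ℕ) : ℤ :=
  ∑ g ∈ Finset.univ.filter
      (fun g : SL2 F => Matrix.trace (g : Matrix (Fin 2) (Fin 2) F) = t), (Ue F ^ n).coeff g

variable {F}

lemma sum_mul_ite (n : ℕ) (p : SL2 F → Prop) [DecidablePred p] :
    ∑ h : SL2 F, (Ue F ^ n).coeff h * (if p h then (1:ℤ) else 0)
      = ∑ g ∈ Finset.univ.filter p, (Ue F ^ n).coeff g := by
  rw [Finset.sum_filter]
  exact Finset.sum_congr rfl fun h _ => by split <;> simp

lemma cT_zero : cT F 0 = 1 := by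
  rw [cT]
  rw [Finset.sum_congr rfl fun h _ => pow_zero_apply h]
  simp

lemma cT_succ (n : ℕ) : cT F (n+1) = (Fintype.card F : ℤ) * cT F n := by
  have h := step (fun _ : SL2 F => True) n
  simp only [Finset.filter_true, if_true] at h
  rw [cT, h]
  simp only [Finset.sum_const, Finset.card_univ, nsmul_eq_mul, mul_one]
  rw [← Finset.sum_mul, mul_comm]
  rfl

lemma cT_eq (n : ℕ) : cT F n = (Fintype.card F : ℤ) ^ n := by
  induction n with
  | zero => simpa using cT_zero
  | succ n ih => rw [cT_succ, ih]; ring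

/-- the main entry-counter recurrence -/
lemma cA_succ (t : F) (n : ℕ) :
    cA F t (n+1) = cT F n - cA F 0 n + (Fintype.card F : ℤ) * cB F (-t) n := by
  rw [cA, step]
  have key : ∀ h : SL2 F,
      (∑ x : F, if ((h * cycleGen x : SL2 F) : Matrix (Fin 2) (Fin 2) F) 0 0 = t
          then (1:ℤ) else 0)
      = (1 - (if (h : Matrix (Fin 2) (Fin 2) F) 0 0 = 0 then 1 else 0))
        + (Fintype.card F : ℤ) *
          (if (h : Matrix (Fin 2) (Fin 2) F) 0 0 = 0
              ∧ (h : Matrix (Fin 2) (Fin 2) F) 0 1 = -t then 1 else 0) := by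
    intro h
    set a := (h : Matrix (Fin 2) (Fin 2) F) 0 0 with ha
    set b := (h : Matrix (Fin 2) (Fin 2) F) 0 1 with hb
    have e : ∀ x : F, (((h * cycleGen x : SL2 F) : Matrix (Fin 2) (Fin 2) F) 0 0 = t)
        ↔ (a * x - b = t) := by
      intro x; rw [mul_cycleGen_coe]; simp [ha, hb]
    simp only [e]
    rw [sum_ite_aff]
    by_cases h0 : a = 0
    · by_cases h1 : b = -t
      · have : t + b = 0 := by rw [h1]; ring
        simp [h0, h1, this]
      · have : ¬ (t + b = 0) := fun hc => h1 (by linear_combination hc)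
        simp [h0, h1, this]
    · simp [h0]
  rw [Finset.sum_congr rfl fun h _ => by rw [key h]]
  have expand : ∀ h : SL2 F, (Ue F ^ n).coeff h *
      ((1 - (if (h : Matrix (Fin 2) (Fin 2) F) 0 0 = 0 then (1:ℤ) else 0))
        + (Fintype.card F : ℤ) *
          (if (h : Matrix (Fin 2) (Fin 2) F) 0 0 = 0
              ∧ (h : Matrix (Fin 2) (Fin 2) F) 0 1 = -t then 1 else 0))
      = (Ue F ^ n).coeff h
        - (Ue F ^ n).coeff h * (if (h : Matrix (Fin 2) (Fin 2) F) 0 0 = 0 then 1 else 0)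
        + (Fintype.card F : ℤ) * ((Ue F ^ n).coeff h *
            (if (h : Matrix (Fin 2) (Fin 2) F) 0 0 = 0
              ∧ (h : Matrix (Fin 2) (Fin 2) F) 0 1 = -t then 1 else 0)) := by
    intro h; ring
  rw [Finset.sum_congr rfl fun h _ => expand h]
  rw [Finset.sum_add_distrib, Finset.sum_sub_distrib, ← Finset.mul_sum]
  rw [sum_mul_ite, sum_mul_ite]
  rfl

lemma cB_zero (n : ℕ) : cB F 0 n = 0 := by
  rw [cB]
  apply Finset.sum_eq_zero
  intro g hg
  rw [Finset.mem_filter] at hg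
  exfalso
  have hd := det_entries g
  rw [hg.2.1, hg.2.2] at hd
  simp at hd

lemma cB_succ (s : F) (hs : s ≠ 0) (n : ℕ) : cB F s (n+1) = cA F s n := by
  rw [cB, step]
  have key : ∀ h : SL2 F,
      (∑ x : F, if ((h * cycleGen x : SL2 F) : Matrix (Fin 2) (Fin 2) F) 0 0 = 0
          ∧ ((h * cycleGen x : SL2 F) : Matrix (Fin 2) (Fin 2) F) 0 1 = s
          then (1:ℤ) else 0)
      = (if (h : Matrix (Fin 2) (Fin 2) F) 0 0 = s then 1 else 0) := by
    intro h
    set a := (h : Matrix (Fin 2) (Fin 2) F) 0 0 with ha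
    set b := (h : Matrix (Fin 2) (Fin 2) F) 0 1 with hb
    have e : ∀ x : F, (((h * cycleGen x : SL2 F) : Matrix (Fin 2) (Fin 2) F) 0 0 = 0
          ∧ ((h * cycleGen x : SL2 F) : Matrix (Fin 2) (Fin 2) F) 0 1 = s)
        ↔ ((a * x - b = 0) ∧ a = s) := by
      intro x; rw [mul_cycleGen_coe]; simp [ha, hb]
    simp only [e]
    by_cases has : a = s
    · have e2 : ∀ x : F, ((a * x - b = 0) ∧ a = s) ↔ (s * x - b = 0) := by
        intro x; rw [has]; simp
      simp only [e2]
      rw [sum_ite_aff s b 0, if_neg hs]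
      simp [has]
    · simp [has]
  rw [Finset.sum_congr rfl fun h _ => by rw [key h]]
  rw [sum_mul_ite]
  rfl

/-- splitting a combined indicator sum into counters -/
lemma sum_split (s : F) (n : ℕ) :
    ∑ h : SL2 F, (Ue F ^ n).coeff h *
      ((1 - (if (h : Matrix (Fin 2) (Fin 2) F) 0 0 = 0 then (1:ℤ) else 0))
        + (Fintype.card F : ℤ) *
          (if (h : Matrix (Fin 2) (Fin 2) F) 0 0 = 0
              ∧ (h : Matrix (Fin 2) (Fin 2) F) 0 1 = s then 1 else 0))
      = cT F n - cA F 0 n + (Fintype.card F : ℤ) * cB F s n := by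
  have expand : ∀ h : SL2 F, (Ue F ^ n).coeff h *
      ((1 - (if (h : Matrix (Fin 2) (Fin 2) F) 0 0 = 0 then (1:ℤ) else 0))
        + (Fintype.card F : ℤ) *
          (if (h : Matrix (Fin 2) (Fin 2) F) 0 0 = 0
              ∧ (h : Matrix (Fin 2) (Fin 2) F) 0 1 = s then 1 else 0))
      = (Ue F ^ n).coeff h
        - (Ue F ^ n).coeff h * (if (h : Matrix (Fin 2) (Fin 2) F) 0 0 = 0 then 1 else 0)
        + (Fintype.card F : ℤ) * ((Ue F ^ n).coeff h *
            (if (h : Matrix (Fin 2) (Fin 2) F) 0 0 = 0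
              ∧ (h : Matrix (Fin 2) (Fin 2) F) 0 1 = s then 1 else 0)) := by
    intro h; ring
  rw [Finset.sum_congr rfl fun h _ => expand h]
  rw [Finset.sum_add_distrib, Finset.sum_sub_distrib, ← Finset.mul_sum]
  rw [sum_mul_ite, sum_mul_ite]
  rfl

lemma cN_two_succ (n : ℕ) :
    cN F 2 (n+1) = cT F n - cA F 0 n + (Fintype.card F : ℤ) * cB F (-1) n := by
  rw [cN, step]
  have key : ∀ h : SL2 F,
      (∑ x : F, if Matrix.trace ((h * cycleGen x : SL2 F) : Matrix (Fin 2) (Fin 2) F) = 2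
          then (1:ℤ) else 0)
      = (1 - (if (h : Matrix (Fin 2) (Fin 2) F) 0 0 = 0 then 1 else 0))
        + (Fintype.card F : ℤ) *
          (if (h : Matrix (Fin 2) (Fin 2) F) 0 0 = 0
              ∧ (h : Matrix (Fin 2) (Fin 2) F) 0 1 = -1 then 1 else 0) := by
    intro h
    have hd := det_entries h
    set a := (h : Matrix (Fin 2) (Fin 2) F) 0 0 with ha
    set b := (h : Matrix (Fin 2) (Fin 2) F) 0 1 with hb
    set c := (h : Matrix (Fin 2) (Fin 2) F) 1 0 with hc
    set d := (h : Matrix (Fin 2) (Fin 2) F) 1 1 with hdd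
    have e : ∀ x : F,
        (Matrix.trace ((h * cycleGen x : SL2 F) : Matrix (Fin 2) (Fin 2) F) = 2)
        ↔ (a * x - b = 2 - c) := by
      intro x
      rw [mul_cycleGen_coe, Matrix.trace_fin_two]
      simp only [Matrix.cons_val_zero, Matrix.cons_val_one, Matrix.head_cons, Matrix.cons_val',
        Matrix.empty_val', Matrix.cons_val_fin_one, Matrix.head_fin_const, Matrix.of_apply,
        Matrix.cons_val_fin_one, Matrix.cons_val_one]
      constructor
      · intro hx; linear_combination hx
      · intro hx; linear_combination hx
    simp only [e]
    rw [sum_ite_aff]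
    by_cases h0 : a = 0
    · have hbc : b * c = -1 := by rw [h0] at hd; linear_combination -hd
      by_cases h1 : b = -1
      · have hc1 : c = 1 := by rw [h1] at hbc; linear_combination -hbc
        have h2 : (2:F) - c + b = 0 := by rw [hc1, h1]; ring
        rw [if_pos h0, if_pos h2, if_pos h0, if_pos (show a = 0 ∧ b = -1 from ⟨h0, h1⟩)]
        ring
      · have h2 : ¬ ((2:F) - c + b = 0) := by
          intro hcc
          apply h1
          have hsq : (b + 1)^2 = 0 := by linear_combination b * hcc + hbc
          have := pow_eq_zero_iff (n := 2) (two_ne_zero) |>.mp hsq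
          linear_combination this
        rw [if_pos h0, if_neg h2, if_pos h0, if_neg (fun hc => h1 hc.2)]
        ring
    · rw [if_neg h0, if_neg h0, if_neg (fun hc : a = 0 ∧ b = -1 => h0 hc.1)]
      ring
  rw [Finset.sum_congr rfl fun h _ => by rw [key h]]
  exact sum_split (-1) n

lemma cN_negtwo_succ (n : ℕ) :
    cN F (-2) (n+1) = cT F n - cA F 0 n + (Fintype.card F : ℤ) * cB F 1 n := by
  rw [cN, step]
  have key : ∀ h : SL2 F,
      (∑ x : F, if Matrix.trace ((h * cycleGen x : SL2 F) : Matrix (Fin 2) (Fin 2) F) = -2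
          then (1:ℤ) else 0)
      = (1 - (if (h : Matrix (Fin 2) (Fin 2) F) 0 0 = 0 then 1 else 0))
        + (Fintype.card F : ℤ) *
          (if (h : Matrix (Fin 2) (Fin 2) F) 0 0 = 0
              ∧ (h : Matrix (Fin 2) (Fin 2) F) 0 1 = 1 then 1 else 0) := by
    intro h
    have hd := det_entries h
    set a := (h : Matrix (Fin 2) (Fin 2) F) 0 0 with ha
    set b := (h : Matrix (Fin 2) (Fin 2) F) 0 1 with hb
    set c := (h : Matrix (Fin 2) (Fin 2) F) 1 0 with hc
    set d := (h : Matrix (Fin 2) (Fin 2) F) 1 1 with hdd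
    have e : ∀ x : F,
        (Matrix.trace ((h * cycleGen x : SL2 F) : Matrix (Fin 2) (Fin 2) F) = -2)
        ↔ (a * x - b = -2 - c) := by
      intro x
      rw [mul_cycleGen_coe, Matrix.trace_fin_two]
      simp only [Matrix.cons_val_zero, Matrix.cons_val_one, Matrix.head_cons, Matrix.cons_val',
        Matrix.empty_val', Matrix.cons_val_fin_one, Matrix.head_fin_const, Matrix.of_apply,
        Matrix.cons_val_fin_one, Matrix.cons_val_one]
      constructor
      · intro hx; linear_combination hx
      · intro hx; linear_combination hx
    simp only [e]
    rw [sum_ite_aff]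
    by_cases h0 : a = 0
    · have hbc : b * c = -1 := by rw [h0] at hd; linear_combination -hd
      by_cases h1 : b = 1
      · have hc1 : c = -1 := by rw [h1] at hbc; linear_combination hbc
        have h2 : (-2:F) - c + b = 0 := by rw [hc1, h1]; ring
        rw [if_pos h0, if_pos h2, if_pos h0, if_pos (show a = 0 ∧ b = 1 from ⟨h0, h1⟩)]
        ring
      · have h2 : ¬ ((-2:F) - c + b = 0) := by
          intro hcc
          apply h1
          have hsq : (b - 1)^2 = 0 := by linear_combination b * hcc + hbc
          have := pow_eq_zero_iff (n := 2) (two_ne_zero) |>.mp hsq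
          linear_combination this
        rw [if_pos h0, if_neg h2, if_pos h0, if_neg (fun hc => h1 hc.2)]
        ring
    · rw [if_neg h0, if_neg h0, if_neg (fun hc : a = 0 ∧ b = 1 => h0 hc.1)]
      ring
  rw [Finset.sum_congr rfl fun h _ => by rw [key h]]
  exact sum_split 1 n

/-! ### base values and closed forms -/

lemma sum_pow_one (p : SL2 F → Prop) [DecidablePred p] :
    ∑ g ∈ Finset.univ.filter p, (Ue F ^ 1).coeff g
      = ∑ x : F, (if p (cycleGen x) then (1:ℤ) else 0) := by
  have h := step p 0
  simp only [Nat.zero_add] at h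
  rw [h]
  have key : ∀ hh : SL2 F, (Ue F ^ 0).coeff hh * (∑ x : F, if p (hh * cycleGen x) then (1:ℤ) else 0)
      = if hh = 1 then (∑ x : F, if p ((1:SL2 F) * cycleGen x) then (1:ℤ) else 0) else 0 := by
    intro hh
    rw [pow_zero_apply]
    by_cases h1 : hh = 1
    · subst h1; simp
    · simp [h1]
  rw [Finset.sum_congr rfl fun hh _ => key hh]
  rw [Finset.sum_ite_eq' Finset.univ (1 : SL2 F)]
  simp

lemma cycleGen_entry (x : F) : ((cycleGen x : SL2 F) : Matrix (Fin 2) (Fin 2) F) 0 0 = x := by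
  simp [cycleGen]

lemma cA_one (t : F) : cA F t 1 = 1 := by
  rw [cA, sum_pow_one]
  have : ∀ x : F, (((cycleGen x : SL2 F) : Matrix (Fin 2) (Fin 2) F) 0 0 = t) ↔ x = t := by
    intro x; rw [cycleGen_entry]
  simp only [this]
  simp

lemma cA_zero_zero : cA F 0 0 = 0 := by
  rw [cA, sum_pow_zero]
  rw [if_neg]
  intro h
  rw [Matrix.SpecialLinearGroup.coe_one] at h
  simp at h

lemma cA0_closed (n : ℕ) :
    cA F 0 n * ((Fintype.card F : ℤ) + 1)
      = (Fintype.card F : ℤ)^n - (-1)^n := by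
  induction n with
  | zero => rw [cA_zero_zero]; ring
  | succ n ih =>
    rw [cA_succ, neg_zero, cB_zero, cT_eq]
    linear_combination -ih

lemma odd_closed (k : ℕ) :
    cA F 1 (2*k+1) * ((Fintype.card F : ℤ)^2 - 1) = (Fintype.card F : ℤ)^(2*k+2) - 1
    ∧ cA F (-1) (2*k+1) * ((Fintype.card F : ℤ)^2 - 1) = (Fintype.card F : ℤ)^(2*k+2) - 1 := by
  induction k with
  | zero =>
    constructor <;> · rw [show 2*0+1 = 1 by norm_num, cA_one]; ring
  | succ k ih =>
    set Q : ℤ := (Fintype.card F : ℤ) with hQ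
    have i1 : 2*(k+1)+1 = (2*k+2)+1 := by ring
    have i2 : 2*(k+1)+2 = 2*k+4 := by ring
    have e1 : cA F 1 ((2*k+2)+1) = Q^(2*k+2) - cA F 0 (2*k+2) + Q * cA F (-1) (2*k+1) := by
      rw [cA_succ, cT_eq, cB_succ (-1) (neg_ne_zero.mpr one_ne_zero) (2*k+1)]
    have e2 : cA F (-1) ((2*k+2)+1) = Q^(2*k+2) - cA F 0 (2*k+2) + Q * cA F 1 (2*k+1) := by
      rw [cA_succ, cT_eq, neg_neg, cB_succ 1 one_ne_zero (2*k+1)]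
    have hz : cA F 0 (2*k+2) * (Q + 1) = Q^(2*k+2) - 1 := by
      rw [cA0_closed]
      have : (-1:ℤ)^(2*k+2) = 1 := Even.neg_one_pow ⟨k+1, by ring⟩
      rw [this]
    rw [i1, i2]
    constructor
    · rw [show 2*k+4 = ((2*k+2)+2) by ring]
      linear_combination (Q^2 - 1) * e1 - (Q - 1) * hz + Q * ih.2
    · rw [show 2*k+4 = ((2*k+2)+2) by ring]
      linear_combination (Q^2 - 1) * e2 - (Q - 1) * hz + Q * ih.1

end Aux

/-- For `U = Σ_{x∈F_q} [(x,1;-1,0)] ∈ ℤ[SL₂(F_q)]` and odd `n`, the sum of the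
coefficients of `U^n` over elements of trace `2` is `(q^(n+1)-1)/(q²-1)`, and the
same holds for trace `-2`. -/
theorem stmt_6 (F : Type*) [Field F] [Fintype F] [DecidableEq F]
    (n : ℕ) (hn : 1 ≤ n) (hodd : Odd n)
    (U : MonoidAlgebra ℤ (Matrix.SpecialLinearGroup (Fin 2) F))
    (hU : U = ∑ x : F, MonoidAlgebra.single (cycleGen x) 1) :
    ((∑ g ∈ Finset.univ.filter
        (fun g : Matrix.SpecialLinearGroup (Fin 2) F =>
          Matrix.trace (g : Matrix (Fin 2) (Fin 2) F) = 2), (U ^ n).coeff g : ℤ) : ℚ)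
      = ((Fintype.card F : ℚ) ^ (n + 1) - 1) / ((Fintype.card F : ℚ) ^ 2 - 1)
    ∧
    ((∑ g ∈ Finset.univ.filter
        (fun g : Matrix.SpecialLinearGroup (Fin 2) F =>
          Matrix.trace (g : Matrix (Fin 2) (Fin 2) F) = -2), (U ^ n).coeff g : ℤ) : ℚ)
      = ((Fintype.card F : ℚ) ^ (n + 1) - 1) / ((Fintype.card F : ℚ) ^ 2 - 1) := by
  have hUe : U = Ue F := by rw [hU]; rfl
  subst hUe
  obtain ⟨k, hk⟩ := hodd
  have hQ1 : (1:ℕ) < Fintype.card F := Fintype.one_lt_card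
  have hden : ((Fintype.card F : ℚ))^2 - 1 ≠ 0 := by
    have : (2:ℚ) ≤ (Fintype.card F : ℚ) := by exact_mod_cast hQ1
    nlinarith
  obtain ⟨m, rfl⟩ : ∃ m, n = m + 1 := ⟨n - 1, (Nat.succ_pred_eq_of_pos hn).symm⟩
  have eN2 : cN F 2 (m+1) = cA F 1 (m+1) := by
    rw [cN_two_succ, cA_succ]
  have eNm2 : cN F (-2) (m+1) = cA F (-1) (m+1) := by
    rw [cN_negtwo_succ, cA_succ, neg_neg]
  have hm : m + 1 = 2*k + 1 := hk
  have key := odd_closed (F := F) k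
  have key1 : cA F 1 (m+1) * ((Fintype.card F : ℤ)^2 - 1)
      = (Fintype.card F : ℤ)^(m+1+1) - 1 := by
    rw [hm, show 2*k+1+1 = 2*k+2 by ring]
    exact key.1
  have key2 : cA F (-1) (m+1) * ((Fintype.card F : ℤ)^2 - 1)
      = (Fintype.card F : ℤ)^(m+1+1) - 1 := by
    rw [hm, show 2*k+1+1 = 2*k+2 by ring]
    exact key.2
  constructor
  · show ((cN F 2 (m+1) : ℤ) : ℚ) = _
    rw [eN2, eq_div_iff hden]
    exact_mod_cast key1
  · show ((cN F (-2) (m+1) : ℤ) : ℚ) = _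
    rw [eNm2, eq_div_iff hden]
    exact_mod_cast key2
end

section
/- Let T be a finite tree with n vertices and let S_T(q) count the invertible Schrödinger operators of T over F_q, viewed as a polynomial in q. Then S_T satisfies the functional equation S_T(q) = (-q)^n · S_T(1/q) (sign-degree-palindromicity). -/
open Matrix Finset Function SimpleGraph

set_option linter.unusedSectionVars false

section DetLemmas

variable {n : Type*} [DecidableEq n] [Fintype n] {R : Type*} [CommRing R]

/-- If row `i` of `M` is the standard basis vector `e_i`, the determinant is
unchanged when column `i` is replaced by `e_i`. -/
theorem det_updateColumn_single (M : Matrix n n R) (i : n)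
    (h : M i = Pi.single i 1) :
    M.det = (M.updateCol i (Pi.single i 1)).det := by
  have hMii : M i i = 1 := by
    have := congrFun h i; rwa [Pi.single_eq_same] at this
  rw [Matrix.det_apply, Matrix.det_apply]
  refine Finset.sum_congr rfl fun σ _ => ?_
  by_cases hσ : σ i = i
  · congr 1
    refine Finset.prod_congr rfl fun k _ => ?_
    by_cases hk : k = i
    · rw [hk, hσ, hMii, Matrix.updateCol_apply, if_pos rfl, Pi.single_eq_same]
    · rw [Matrix.updateCol_apply, if_neg hk]
  · have hinv : σ⁻¹ i ≠ i := fun hc => hσ (by conv_lhs => rw [← hc, Equiv.Perm.coe_inv, Equiv.apply_symm_apply])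
    have h0 : M i (σ⁻¹ i) = 0 := by
      rw [h]; exact Pi.single_eq_of_ne hinv 1
    have e1 : ∏ k, M (σ k) k = 0 :=
      Finset.prod_eq_zero (Finset.mem_univ (σ⁻¹ i))
        (by rw [Equiv.Perm.coe_inv, Equiv.apply_symm_apply]; exact h0)
    have e2 : ∏ k, (M.updateCol i (Pi.single i 1)) (σ k) k = 0 :=
      Finset.prod_eq_zero (Finset.mem_univ (σ⁻¹ i))
        (by rw [show σ (σ⁻¹ i) = i from Equiv.Perm.eq_inv_iff_eq.mp rfl, Matrix.updateCol_apply, if_neg hinv]; exact h0)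
    rw [e1, e2]

/-- If column `i` of `M` is the standard basis vector `e_i`, the determinant is
unchanged when row `i` is replaced by `e_i`. -/
theorem det_updateRow_single (M : Matrix n n R) (i : n)
    (h : ∀ x, M x i = Pi.single (M := fun _ => R) i 1 x) :
    M.det = (M.updateRow i (Pi.single i 1)).det := by
  have hMii : M i i = 1 := by
    have := h i; rwa [Pi.single_eq_same] at this
  rw [Matrix.det_apply, Matrix.det_apply]
  refine Finset.sum_congr rfl fun σ _ => ?_
  by_cases hσ : σ i = i
  · congr 1
    refine Finset.prod_congr rfl fun k _ => ?_
    by_cases hk : σ k = i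
    · have hk' : k = i := σ.injective (hk.trans hσ.symm)
      rw [hk', hσ, hMii, Matrix.updateRow_apply, if_pos rfl, Pi.single_eq_same]
    · rw [Matrix.updateRow_apply, if_neg hk]
  · have h0 : M (σ i) i = 0 := by rw [h (σ i)]; exact Pi.single_eq_of_ne hσ 1
    have e1 : ∏ k, M (σ k) k = 0 :=
      Finset.prod_eq_zero (Finset.mem_univ i) h0
    have e2 : ∏ k, (M.updateRow i (Pi.single i 1)) (σ k) k = 0 :=
      Finset.prod_eq_zero (Finset.mem_univ i)
        (by rw [Matrix.updateRow_apply, if_neg hσ]; exact h0)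
    rw [e1, e2]

end DetLemmas

section Mat

variable {V : Type*} [Fintype V] [DecidableEq V] (G : SimpleGraph V) [DecidableRel G.Adj]
variable {F : Type*} [Field F]

/-- The Schrödinger matrix of the induced subgraph on `S`, extended by the
identity outside of `S`. -/
def matS (S : Finset V) (d : V → F) : Matrix V V F :=
  Matrix.of fun i j =>
    if i = j then (if i ∈ S then d i else 1)
    else (if i ∈ S ∧ j ∈ S ∧ G.Adj i j then 1 else 0)

lemma matS_update_of_not_mem {S : Finset V} {x : V} (hx : x ∉ S) (d : V → F) (c : F) :
    matS G S (Function.update d x c) = matS G S d := by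
  ext i j
  simp only [matS, Matrix.of_apply]
  by_cases hij : i = j
  · subst hij
    by_cases hi : i ∈ S
    · rw [Function.update_of_ne (show i ≠ x from fun h => hx (h ▸ hi))]
    · simp [hi]
  · simp [hij]

/-- Linearity of the determinant in the diagonal entry at `v`. -/
lemma det_matS_update {S : Finset V} {v : V} (hv : v ∈ S) (d : V → F) (c : F) :
    (matS G S (Function.update d v c)).det
      = c * (matS G (S.erase v) d).det + (matS G S (Function.update d v 0)).det := by
  set M₀ := matS G S (Function.update d v 0) with hM₀
  have hrow : matS G S (Function.update d v c)
      = M₀.updateRow v (c • (Pi.single v 1 : V → F) + M₀ v) := by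
    ext i j
    by_cases hi : i = v
    · subst hi
      rw [Matrix.updateRow_self]
      by_cases hij : i = j
      · subst hij
        simp [matS, hv, hM₀, Function.update_self]
      · simp only [matS, Matrix.of_apply, if_neg hij, Pi.add_apply, Pi.smul_apply,
          Pi.single_eq_of_ne (fun h : j = i => hij h.symm), smul_eq_mul, mul_zero, zero_add]
        simp [hM₀, matS, hij]
    · rw [Matrix.updateRow_ne hi]
      simp only [matS, Matrix.of_apply, hM₀]
      by_cases hij : i = j
      · subst hij
        by_cases hiS : i ∈ S
        · simp only [if_pos rfl, if_pos hiS,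
            Function.update_of_ne hi]
        · simp [hiS]
      · simp [hij]

  rw [hrow, Matrix.det_updateRow_add, Matrix.det_updateRow_smul,
    Matrix.updateRow_eq_self]
  congr 2
  -- det (M₀.updateRow v (Pi.single v 1)) = det (matS G (S.erase v) d)
  set X := M₀.updateRow v (Pi.single v 1) with hX
  have hXrow : X v = Pi.single v 1 := Matrix.updateRow_self
  rw [det_updateColumn_single X v hXrow]
  congr 1
  ext i j
  rw [Matrix.updateCol_apply]
  by_cases hj : j = v
  · subst hj
    rw [if_pos rfl]
    by_cases hi : i = j
    · subst hi
      simp [matS, Finset.notMem_erase]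
    · rw [Pi.single_eq_of_ne hi]
      simp only [matS, Matrix.of_apply, if_neg hi]
      rw [if_neg]
      rintro ⟨-, hj', -⟩
      exact absurd rfl (Finset.mem_erase.mp hj').1
  · rw [if_neg hj, hX]
    by_cases hi : i = v
    · subst hi
      rw [Matrix.updateRow_self, Pi.single_eq_of_ne (fun h : j = i => hj h)]
      simp only [matS, Matrix.of_apply, if_neg (fun h : i = j => hj h.symm)]
      rw [if_neg]
      rintro ⟨hi', -, -⟩
      exact absurd rfl (Finset.mem_erase.mp hi').1
    · rw [Matrix.updateRow_ne hi]
      simp only [matS, Matrix.of_apply, hM₀]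
      by_cases hij : i = j
      · subst hij
        by_cases hiS : i ∈ S
        · rw [if_pos rfl, if_pos rfl, if_pos hiS, if_pos (Finset.mem_erase.mpr ⟨hi, hiS⟩),
            Function.update_of_ne hi]
        · rw [if_pos rfl, if_pos rfl, if_neg hiS,
            if_neg (fun h => hiS (Finset.mem_of_mem_erase h))]
      · rw [if_neg hij, if_neg hij]
        by_cases h1 : i ∈ S ∧ j ∈ S ∧ G.Adj i j
        · rw [if_pos h1, if_pos ⟨Finset.mem_erase.mpr ⟨hi, h1.1⟩,
            Finset.mem_erase.mpr ⟨hj, h1.2.1⟩, h1.2.2⟩]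
        · rw [if_neg h1, if_neg (fun h2 => h1 ⟨Finset.mem_of_mem_erase h2.1,
            Finset.mem_of_mem_erase h2.2.1, h2.2.2⟩)]

/-- If `v ∈ S` has no neighbours in `S`, the determinant with `d v = 0` vanishes. -/
lemma det_matS_isolated {S : Finset V} {v : V} (hv : v ∈ S)
    (h0 : ∀ u ∈ S, ¬ G.Adj v u) (d : V → F) :
    (matS G S (Function.update d v 0)).det = 0 := by
  apply Matrix.det_eq_zero_of_row_eq_zero v
  intro j
  by_cases hij : v = j
  · subst hij
    simp [matS, hv]
  · simp only [matS, Matrix.of_apply, if_neg hij, ite_eq_right_iff]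
    rintro ⟨-, hj, hadj⟩
    exact absurd hadj (h0 j hj)


/-- If `u` is the unique neighbour of `v` inside `S`, then setting `d v = 0`
gives determinant `-det(matS (S\{v,u}))`. -/
lemma det_matS_leaf {S : Finset V} {v u : V} (hv : v ∈ S) (hu : u ∈ S)
    (hadj : G.Adj v u) (huniq : ∀ w ∈ S, G.Adj v w → w = u) (d : V → F) :
    (matS G S (Function.update d v 0)).det
      = - (matS G ((S.erase v).erase u) d).det := by
  have hvu : v ≠ u := G.ne_of_adj hadj
  set M := matS G S (Function.update d v 0) with hM
  have hrowv : M v = Pi.single u 1 := by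
    funext j
    by_cases hj : j = u
    · rw [hj, Pi.single_eq_same]
      simp only [hM, matS, Matrix.of_apply]
      rw [if_neg (fun h : v = u => hvu h), if_pos ⟨hv, hu, hadj⟩]
    · rw [Pi.single_eq_of_ne hj]
      by_cases hjv : v = j
      · subst hjv
        simp [hM, matS, hv]
      · simp only [hM, matS, Matrix.of_apply, if_neg hjv, ite_eq_right_iff]
        rintro ⟨-, hjS, hadj'⟩
        exact absurd (huniq j hjS hadj') hj
  have hcolv : ∀ x, M x v = Pi.single (M := fun _ => F) u 1 x := by
    intro x
    by_cases hx : x = u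
    · rw [hx, Pi.single_eq_same]
      simp only [hM, matS, Matrix.of_apply]
      rw [if_neg (fun h : u = v => hvu h.symm), if_pos ⟨hu, hv, hadj.symm⟩]
    · rw [Pi.single_eq_of_ne hx]
      by_cases hxv : x = v
      · subst hxv
        simp [hM, matS, hv]
      · simp only [hM, matS, Matrix.of_apply, if_neg hxv, ite_eq_right_iff]
        rintro ⟨hxS, -, hadj'⟩
        exact absurd (huniq x hxS hadj'.symm) hx
  -- swap rows u and v
  set N := M.submatrix (⇑(Equiv.swap v u)) id with hN
  have hdetN : N.det = - M.det := by
    rw [hN, Matrix.det_permute, Equiv.Perm.sign_swap hvu]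
    simp
  -- column v of N is e_v
  have hcolN : ∀ x, N x v = Pi.single (M := fun _ => F) v 1 x := by
    intro x
    rw [hN]
    simp only [Matrix.submatrix_apply, id_eq]
    rw [hcolv (Equiv.swap v u x)]
    by_cases hx : x = v
    · rw [hx, Equiv.swap_apply_left, Pi.single_eq_same, Pi.single_eq_same]
    · rw [Pi.single_eq_of_ne hx]
      rw [Pi.single_eq_of_ne]
      intro hc
      apply hx
      have := (Equiv.swap v u).injective (a₁ := x) (a₂ := v)
      apply this
      rw [hc, Equiv.swap_apply_left]
  rw [show M.det = - N.det by rw [hdetN]; ring]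
  rw [det_updateRow_single N v hcolN]
  set N' := N.updateRow v (Pi.single v 1) with hN'
  have hrowu : N' u = Pi.single u 1 := by
    funext j
    rw [hN', Matrix.updateRow_ne (fun h : u = v => hvu h.symm), hN]
    simp only [Matrix.submatrix_apply, id_eq, Equiv.swap_apply_right]
    rw [hrowv]
  rw [det_updateColumn_single N' u hrowu]
  congr 2
  ext i j
  rw [Matrix.updateCol_apply]
  by_cases hju : j = u
  · subst hju
    rw [if_pos rfl]
    by_cases hi : i = j
    · subst hi
      rw [Pi.single_eq_same]
      simp [matS, Finset.notMem_erase]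
    · rw [Pi.single_eq_of_ne hi]
      simp only [matS, Matrix.of_apply, if_neg hi]
      rw [if_neg]
      rintro ⟨-, hj', -⟩
      exact absurd rfl (Finset.mem_erase.mp hj').1
  · rw [if_neg hju, hN']
    by_cases hiv : i = v
    · subst hiv
      rw [Matrix.updateRow_self]
      by_cases hij : i = j
      · subst hij
        rw [Pi.single_eq_same]
        simp [matS, Finset.notMem_erase]
      · rw [Pi.single_eq_of_ne (fun h : j = i => hij h.symm)]
        simp only [matS, Matrix.of_apply, if_neg hij]
        rw [if_neg]
        rintro ⟨hi', -, -⟩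
        exact (Finset.mem_erase.mp (Finset.mem_of_mem_erase hi')).1 rfl
    · rw [Matrix.updateRow_ne hiv, hN]
      simp only [Matrix.submatrix_apply, id_eq]
      by_cases hiu : i = u
      · subst hiu
        rw [Equiv.swap_apply_right, hrowv, Pi.single_eq_of_ne hju]
        simp only [matS, Matrix.of_apply]
        rw [if_neg (fun h : i = j => hju h.symm), if_neg]
        rintro ⟨h2, -, -⟩
        exact Finset.notMem_erase i _ h2
      · rw [Equiv.swap_apply_of_ne_of_ne hiv hiu]
        simp only [hM, matS, Matrix.of_apply]
        by_cases hij : i = j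
        · subst hij
          rw [if_pos rfl, if_pos rfl, Function.update_of_ne hiv]
          by_cases hiS : i ∈ S
          · rw [if_pos hiS,
              if_pos (Finset.mem_erase.mpr ⟨hiu, Finset.mem_erase.mpr ⟨hiv, hiS⟩⟩)]
          · rw [if_neg hiS,
              if_neg (fun h => hiS (Finset.mem_of_mem_erase (Finset.mem_of_mem_erase h)))]
        · rw [if_neg hij, if_neg hij]
          by_cases h1 : i ∈ S ∧ j ∈ S ∧ G.Adj i j
          · have hjv : j ≠ v := fun hjv => hiu (huniq i h1.1 (hjv ▸ h1.2.2).symm)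
            rw [if_pos h1,
              if_pos ⟨Finset.mem_erase.mpr ⟨hiu, Finset.mem_erase.mpr ⟨hiv, h1.1⟩⟩,
                Finset.mem_erase.mpr ⟨hju, Finset.mem_erase.mpr ⟨hjv, h1.2.1⟩⟩, h1.2.2⟩]
          · rw [if_neg h1, if_neg (fun h2 => h1 ⟨Finset.mem_of_mem_erase (Finset.mem_of_mem_erase h2.1),
              Finset.mem_of_mem_erase (Finset.mem_of_mem_erase h2.2.1), h2.2.2⟩)]

end Mat

section Counting

variable {V : Type*} [Fintype V] [DecidableEq V] (G : SimpleGraph V) [DecidableRel G.Adj]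
variable (F : Type*) [Field F] [Fintype F] [DecidableEq F]

set_option linter.unusedSectionVars false

/-- The number of `d` supported on `S` making the Schrödinger operator of the
induced subgraph on `S` invertible. -/
def cnt (S : Finset V) : ℕ :=
  (Finset.univ.filter fun d : V → F =>
    (matS G S d).det ≠ 0 ∧ ∀ x, x ∉ S → d x = 0).card

lemma card_root {p : F} (hp : p ≠ 0) (r : F) :
    (Finset.univ.filter fun c : F => c * p + r = 0).card = 1 := by
  have h : (Finset.univ.filter fun c : F => c * p + r = 0) = {(-r) / p} := by
    ext c
    simp only [Finset.mem_filter, Finset.mem_univ, true_and, Finset.mem_singleton]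
    rw [eq_div_iff hp, eq_comm (b := -r), neg_eq_iff_add_eq_zero, add_comm]
  rw [h, Finset.card_singleton]

lemma card_linear (p r : F) :
    (Finset.univ.filter fun c : F => c * p + r ≠ 0).card
      = if p ≠ 0 then Fintype.card F - 1 else if r ≠ 0 then Fintype.card F else 0 := by
  by_cases hp : p ≠ 0
  · rw [if_pos hp]
    have h := Finset.card_filter_add_card_filter_not
      (s := (Finset.univ : Finset F)) (p := fun c => c * p + r = 0)
    rw [Finset.card_univ, card_root F hp r] at h
    have h2 : (Finset.univ.filter fun c : F => c * p + r ≠ 0).card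
        = (Finset.univ.filter fun a : F => ¬ (a * p + r = 0)).card := by
      simp only [ne_eq]
    omega
  · rw [if_neg hp]
    push_neg at hp
    subst hp
    by_cases hr : r ≠ 0
    · rw [if_pos hr, ← Finset.card_univ]
      congr 1
      apply Finset.filter_true_of_mem
      intro c _
      simpa using hr
    · rw [if_neg hr]
      push_neg at hr
      subst hr
      rw [Finset.card_eq_zero]
      apply Finset.filter_false_of_mem
      intro c _
      simp

/-- Fibering the count over the value of `d` at a vertex `v ∈ S`. -/
lemma cnt_fiber {S : Finset V} {v : V} (hv : v ∈ S) :
    cnt G F S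
      = ∑ b ∈ Finset.univ.filter (fun b : V → F => ∀ x, x ∉ S.erase v → b x = 0),
          (Finset.univ.filter fun c : F =>
            c * (matS G (S.erase v) b).det + (matS G S b).det ≠ 0).card := by
  have hAB : ∀ d ∈ (Finset.univ.filter fun d : V → F =>
      (matS G S d).det ≠ 0 ∧ ∀ x, x ∉ S → d x = 0),
      Function.update d v 0 ∈ (Finset.univ.filter
        (fun b : V → F => ∀ x, x ∉ S.erase v → b x = 0)) := by
    intro d hd
    rw [Finset.mem_filter] at hd ⊢
    refine ⟨Finset.mem_univ _, fun x hx => ?_⟩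
    rcases eq_or_ne x v with rfl | hxv
    · rw [Function.update_self]
    · rw [Function.update_of_ne hxv]
      exact hd.2.2 x (fun hxS => hx (Finset.mem_erase.mpr ⟨hxv, hxS⟩))
  rw [cnt, Finset.card_eq_sum_card_fiberwise hAB]
  refine Finset.sum_congr rfl fun b hb => ?_
  have hbv : b v = 0 := (Finset.mem_filter.mp hb).2 v (Finset.notMem_erase v S)
  have hb0 : Function.update b v 0 = b := by rw [← hbv, Function.update_eq_self]
  have hdet : ∀ c : F, (matS G S (Function.update b v c)).det
      = c * (matS G (S.erase v) b).det + (matS G S b).det := by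
    intro c
    rw [det_matS_update G hv b c, hb0]
  have hsupp : ∀ x, x ∉ S.erase v → b x = 0 := (Finset.mem_filter.mp hb).2
  refine Finset.card_bij' (fun d _ => d v)
    (fun c _ => Function.update b v c) ?_ ?_ ?_ ?_
  · -- maps fiber into c-set
    intro d hd
    rw [Finset.mem_filter] at hd ⊢
    obtain ⟨hdA, hfib⟩ := hd
    rw [Finset.mem_filter] at hdA
    have hdrep : d = Function.update b v (d v) := by
      funext x
      rcases eq_or_ne x v with rfl | hxv
      · rw [Function.update_self]
      · rw [Function.update_of_ne hxv, ← hfib, Function.update_of_ne hxv]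
    refine ⟨Finset.mem_univ _, ?_⟩
    rw [← hdet (d v), ← hdrep]
    exact hdA.2.1
  · -- maps c-set into fiber
    intro c hc
    rw [Finset.mem_filter] at hc
    rw [Finset.mem_filter, Finset.mem_filter]
    refine ⟨⟨Finset.mem_univ _, ?_, ?_⟩, ?_⟩
    · rw [hdet c]; exact hc.2
    · intro x hx
      rcases eq_or_ne x v with rfl | hxv
      · exact absurd hv hx
      · rw [Function.update_of_ne hxv]
        exact hsupp x (fun h => hx (Finset.mem_of_mem_erase h))
    · rw [Function.update_idem]
      exact hb0
  · -- left inverse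
    intro d hd
    rw [Finset.mem_filter] at hd
    obtain ⟨-, hfib⟩ := hd
    funext x
    rcases eq_or_ne x v with rfl | hxv
    · rw [Function.update_self]
    · rw [Function.update_of_ne hxv, ← hfib, Function.update_of_ne hxv]
  · -- right inverse
    intro c hc
    rw [Function.update_self]


/-- Counting assignments supported on `T` where the determinant on `T` vanishes
but the determinant on `T.erase u` does not. -/
lemma card_deg {T : Finset V} {u : V} (hu : u ∈ T) :
    (Finset.univ.filter fun b : V → F => (∀ x, x ∉ T → b x = 0) ∧
        (matS G T b).det = 0 ∧ (matS G (T.erase u) b).det ≠ 0).card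
      = cnt G F (T.erase u) := by
  have hmap : ∀ b ∈ (Finset.univ.filter fun b : V → F => (∀ x, x ∉ T → b x = 0) ∧
      (matS G T b).det = 0 ∧ (matS G (T.erase u) b).det ≠ 0),
      Function.update b u 0 ∈ (Finset.univ.filter fun d : V → F =>
        (matS G (T.erase u) d).det ≠ 0 ∧ ∀ x, x ∉ T.erase u → d x = 0) := by
    intro b hb
    rw [Finset.mem_filter] at hb ⊢
    refine ⟨Finset.mem_univ _, ?_, ?_⟩
    · rw [matS_update_of_not_mem G (Finset.notMem_erase u T) b 0]
      exact hb.2.2.2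
    · intro x hx
      rcases eq_or_ne x u with rfl | hxu
      · rw [Function.update_self]
      · rw [Function.update_of_ne hxu]
        exact hb.2.1 x (fun hxT => hx (Finset.mem_erase.mpr ⟨hxu, hxT⟩))
  rw [cnt, Finset.card_eq_sum_card_fiberwise hmap]
  rw [Finset.sum_congr rfl (g := fun _ => 1) ?_, Finset.sum_const, smul_eq_mul, mul_one]
  intro e he
  rw [Finset.mem_filter] at he
  obtain ⟨-, hdet, hesupp⟩ := he
  have heu : e u = 0 := hesupp u (Finset.notMem_erase u T)
  have he0 : Function.update e u 0 = e := by rw [← heu, Function.update_eq_self]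
  set p := (matS G (T.erase u) e).det with hp
  set r := (matS G T e).det with hr
  have hdet' : ∀ c : F, (matS G T (Function.update e u c)).det = c * p + r := by
    intro c
    rw [det_matS_update G hu e c, he0]
  rw [Finset.card_eq_one]
  refine ⟨Function.update e u ((-r) / p), ?_⟩
  ext d
  simp only [Finset.mem_filter, Finset.mem_singleton]
  constructor
  · rintro ⟨⟨-, hsupp, hdT, hdTu⟩, hfib⟩
    have hdrep : d = Function.update e u (d u) := by
      funext x
      rcases eq_or_ne x u with rfl | hxu
      · rw [Function.update_self]
      · rw [Function.update_of_ne hxu, ← hfib, Function.update_of_ne hxu]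
    have h0 : d u * p + r = 0 := by rw [← hdet' (d u), ← hdrep]; exact hdT
    have hdu : d u = (-r) / p := by
      rw [eq_div_iff hdet]
      exact eq_neg_of_add_eq_zero_left h0
    rw [hdrep, hdu]
  · rintro rfl
    refine ⟨⟨Finset.mem_univ _, ?_, ?_, ?_⟩, ?_⟩
    · intro x hx
      rcases eq_or_ne x u with rfl | hxu
      · exact absurd hu hx
      · rw [Function.update_of_ne hxu]
        exact hesupp x (fun h => hx (Finset.mem_of_mem_erase h))
    · rw [hdet', div_mul_cancel₀ _ hdet]
      ring
    · rw [matS_update_of_not_mem G (Finset.notMem_erase u T) e _]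
      exact hdet
    · rw [Function.update_idem, he0]

lemma filter_supp_det (T : Finset V) :
    (Finset.univ.filter (fun b : V → F => ∀ x, x ∉ T → b x = 0)).filter
        (fun b => (matS G T b).det ≠ 0)
      = Finset.univ.filter (fun d : V → F =>
          (matS G T d).det ≠ 0 ∧ ∀ x, x ∉ T → d x = 0) := by
  rw [Finset.filter_filter]
  apply Finset.filter_congr
  intro d _
  tauto

lemma cnt_empty : cnt G F (∅ : Finset V) = 1 := by
  rw [cnt, Finset.card_eq_one]
  refine ⟨(fun _ => 0), ?_⟩
  have hmat : ∀ d : V → F, matS G (∅ : Finset V) d = 1 := by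
    intro d
    ext i j
    by_cases hij : i = j
    · subst hij; simp [matS, Matrix.one_apply]
    · simp [matS, hij, Matrix.one_apply, hij]
  ext d
  simp only [Finset.mem_filter, Finset.mem_univ, true_and, Finset.mem_singleton, hmat,
    Matrix.det_one, Finset.notMem_empty, not_false_iff, forall_true_left]
  constructor
  · rintro ⟨-, h⟩
    funext x
    exact h x
  · rintro rfl
    exact ⟨one_ne_zero, fun x => rfl⟩

lemma cnt_isolated {S : Finset V} {v : V} (hv : v ∈ S)
    (h0 : ∀ u ∈ S, ¬ G.Adj v u) :
    cnt G F S = (Fintype.card F - 1) * cnt G F (S.erase v) := by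
  rw [cnt_fiber G F hv]
  have key : ∀ b ∈ Finset.univ.filter (fun b : V → F => ∀ x, x ∉ S.erase v → b x = 0),
      (Finset.univ.filter fun c : F =>
        c * (matS G (S.erase v) b).det + (matS G S b).det ≠ 0).card
      = if (matS G (S.erase v) b).det ≠ 0 then Fintype.card F - 1 else 0 := by
    intro b hb
    rw [Finset.mem_filter] at hb
    have hbv : b v = 0 := hb.2 v (Finset.notMem_erase v S)
    have hb0 : Function.update b v 0 = b := by rw [← hbv, Function.update_eq_self]
    have hz : (matS G S b).det = 0 := by
      rw [← hb0]
      exact det_matS_isolated G hv h0 b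
    rw [hz, card_linear]
    by_cases hp : (matS G (S.erase v) b).det ≠ 0
    · rw [if_pos hp, if_pos hp]
    · rw [if_neg hp, if_neg hp, if_neg (by simp)]
  rw [Finset.sum_congr rfl key, ← Finset.sum_filter, Finset.sum_const, smul_eq_mul,
    filter_supp_det, mul_comm]
  rfl

lemma cnt_leaf {S : Finset V} {v u : V} (hv : v ∈ S) (hu : u ∈ S)
    (hadj : G.Adj v u) (huniq : ∀ w ∈ S, G.Adj v w → w = u) :
    cnt G F S = (Fintype.card F - 1) * cnt G F (S.erase v)
      + Fintype.card F * cnt G F ((S.erase v).erase u) := by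
  have hu' : u ∈ S.erase v := Finset.mem_erase.mpr ⟨hadj.ne', hu⟩
  rw [cnt_fiber G F hv]
  have key : ∀ b ∈ Finset.univ.filter (fun b : V → F => ∀ x, x ∉ S.erase v → b x = 0),
      (Finset.univ.filter fun c : F =>
        c * (matS G (S.erase v) b).det + (matS G S b).det ≠ 0).card
      = (if (matS G (S.erase v) b).det ≠ 0 then Fintype.card F - 1 else 0)
        + (if (matS G (S.erase v) b).det = 0 ∧ (matS G ((S.erase v).erase u) b).det ≠ 0
            then Fintype.card F else 0) := by
    intro b hb
    rw [Finset.mem_filter] at hb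
    have hbv : b v = 0 := hb.2 v (Finset.notMem_erase v S)
    have hb0 : Function.update b v 0 = b := by rw [← hbv, Function.update_eq_self]
    have hz : (matS G S b).det = - (matS G ((S.erase v).erase u) b).det := by
      conv_lhs => rw [← hb0]
      exact det_matS_leaf G hv hu hadj huniq b
    rw [hz, card_linear]
    by_cases hp : (matS G (S.erase v) b).det ≠ 0
    · rw [if_pos hp, if_pos hp, if_neg (fun h => hp h.1), add_zero]
    · push_neg at hp
      rw [if_neg (by simp [hp])]
      simp only [neg_ne_zero]
      by_cases hq : (matS G ((S.erase v).erase u) b).det ≠ 0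
      · rw [if_pos hq, if_neg (by simp [hp]), zero_add, if_pos ⟨hp, hq⟩]
      · rw [if_neg hq, if_neg (by simp [hp]), zero_add, if_neg (fun h => hq h.2)]
  rw [Finset.sum_congr rfl key, Finset.sum_add_distrib]
  congr 1
  · rw [← Finset.sum_filter, Finset.sum_const, smul_eq_mul, filter_supp_det, mul_comm]
    rfl
  · rw [← Finset.sum_filter, Finset.sum_const, smul_eq_mul, Finset.filter_filter, mul_comm]
    rw [← card_deg G F hu']

end Counting

section Leaf
variable {V : Type*} [Fintype V] [DecidableEq V] {G : SimpleGraph V}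

lemma support_dist_le {r x z : V} (p : G.Walk r x) (hz : z ∈ p.support) :
    G.dist r z ≤ p.length :=
  le_trans (SimpleGraph.dist_le (p.takeUntil z hz)) (SimpleGraph.Walk.length_takeUntil_le p hz)

lemma support_eq_end {r x z : V} (p : G.Walk r x) (hp : p.length = G.dist r x)
    (hz : z ∈ p.support) (hdz : G.dist r z = G.dist r x) : z = x := by
  have h1 : G.dist r z ≤ (p.takeUntil z hz).length := SimpleGraph.dist_le _
  have h2 : (p.takeUntil z hz).length + (p.dropUntil z hz).length = p.length := by
    rw [← SimpleGraph.Walk.length_append, SimpleGraph.Walk.take_spec]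
  have h3 : (p.dropUntil z hz).length = 0 := by omega
  exact SimpleGraph.Walk.eq_of_length_eq_zero h3

lemma adj_dist_ne (hT : G.IsTree) {r x y : V} (hadj : G.Adj x y) :
    G.dist r x ≠ G.dist r y := by
  intro heq
  have hconn := hT.isConnected
  obtain ⟨p, hp, hl⟩ := hconn.exists_path_of_dist r x
  have hy : y ∉ p.support := by
    intro hy
    have := support_eq_end p hl hy (by omega)
    exact G.irrefl (this ▸ hadj)
  -- the walk `cons hadj.symm p.reverse : Walk y r`, reversed, is a path from r to y
  have hW : (SimpleGraph.Walk.cons hadj.symm p.reverse).IsPath := by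
    rw [SimpleGraph.Walk.cons_isPath_iff]
    refine ⟨hp.reverse, ?_⟩
    rw [SimpleGraph.Walk.support_reverse, List.mem_reverse]
    exact hy
  obtain ⟨q, hq, hlq⟩ := hconn.exists_path_of_dist y r
  have := hT.IsAcyclic.path_unique ⟨SimpleGraph.Walk.cons hadj.symm p.reverse, hW⟩ ⟨q, hq⟩
  have hlen := congrArg (fun P : G.Path y r => (P : G.Walk y r).length) this
  simp only [SimpleGraph.Walk.length_cons, SimpleGraph.Walk.length_reverse] at hlen
  rw [hl, hlq, SimpleGraph.dist_comm (u := y)] at hlen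
  omega

/-- Every nonempty subset of a tree contains a vertex with at most one
neighbour inside the subset. -/
lemma exists_leaf (hT : G.IsTree) (S : Finset V) (hS : S.Nonempty) :
    ∃ v ∈ S, ∀ u₁ u₂ : V, u₁ ∈ S → u₂ ∈ S → G.Adj v u₁ → G.Adj v u₂ → u₁ = u₂ := by
  have hconn := hT.isConnected
  haveI : Nonempty V := hconn.nonempty
  set r := Classical.arbitrary V with hr
  obtain ⟨v, hvS, hmax⟩ := S.exists_max_image (fun x => G.dist r x) hS
  refine ⟨v, hvS, ?_⟩
  have key : ∀ u, u ∈ S → G.Adj v u → G.dist r u + 1 = G.dist r v := by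
    intro u hu ha
    have hle : G.dist r u ≤ G.dist r v := hmax u hu
    have hne : G.dist r u ≠ G.dist r v := fun h => (adj_dist_ne hT ha) h.symm
    have hd1 : G.dist u v ≤ 1 := by
      simpa using SimpleGraph.dist_le (SimpleGraph.Walk.cons ha.symm SimpleGraph.Walk.nil)
    have htr : G.dist r v ≤ G.dist r u + G.dist u v := hconn.dist_triangle
    omega
  intro u₁ u₂ h1 h2 ha1 ha2
  obtain ⟨p₁, hp₁, hl₁⟩ := hconn.exists_path_of_dist r u₁
  obtain ⟨p₂, hp₂, hl₂⟩ := hconn.exists_path_of_dist r u₂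
  have hk1 := key u₁ h1 ha1
  have hk2 := key u₂ h2 ha2
  have hnv₁ : v ∉ p₁.support := by
    intro hz
    have := support_dist_le p₁ hz
    omega
  have hnv₂ : v ∉ p₂.support := by
    intro hz
    have := support_dist_le p₂ hz
    omega
  have hW₁ : (SimpleGraph.Walk.cons ha1 p₁.reverse).IsPath := by
    rw [SimpleGraph.Walk.cons_isPath_iff]
    exact ⟨hp₁.reverse, by rw [SimpleGraph.Walk.support_reverse, List.mem_reverse]; exact hnv₁⟩
  have hW₂ : (SimpleGraph.Walk.cons ha2 p₂.reverse).IsPath := by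
    rw [SimpleGraph.Walk.cons_isPath_iff]
    exact ⟨hp₂.reverse, by rw [SimpleGraph.Walk.support_reverse, List.mem_reverse]; exact hnv₂⟩
  have heq := hT.IsAcyclic.path_unique
    ⟨SimpleGraph.Walk.cons ha1 p₁.reverse, hW₁⟩ ⟨SimpleGraph.Walk.cons ha2 p₂.reverse, hW₂⟩
  have hsup := congrArg (fun P : G.Path v r => (P : G.Walk v r).support) heq
  simp only [SimpleGraph.Walk.support_cons] at hsup
  have h2 : p₁.reverse.support = p₂.reverse.support := by
    injection hsup with ha hb
  rw [SimpleGraph.Walk.support_eq_cons p₁.reverse,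
    SimpleGraph.Walk.support_eq_cons p₂.reverse] at h2
  injection h2 with h3 _

end Leaf

/-- Sign-degree palindromicity of an integer polynomial. -/
def Pal (n : ℕ) (P : Polynomial ℤ) : Prop :=
  ∀ q : ℚ, q ≠ 0 → Polynomial.aeval q P = (-q) ^ n * Polynomial.aeval q⁻¹ P

lemma pal_one : Pal 0 1 := by
  intro q hq
  simp

lemma pal_step1 {n : ℕ} {P : Polynomial ℤ} (h : Pal n P) :
    Pal (n + 1) ((Polynomial.X - 1) * P) := by
  intro q hq
  have hB := h q hq
  have hq' : q * q⁻¹ = 1 := mul_inv_cancel₀ hq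
  simp only [_root_.map_mul, map_sub, Polynomial.aeval_X, _root_.map_one]
  rw [hB, pow_succ]
  linear_combination ((-q) ^ n * Polynomial.aeval q⁻¹ P) * hq'

lemma pal_step2 {n : ℕ} {P₁ P₂ : Polynomial ℤ} (h1 : Pal (n + 1) P₁) (h2 : Pal n P₂) :
    Pal (n + 2) ((Polynomial.X - 1) * P₁ + Polynomial.X * P₂) := by
  intro q hq
  have hB₁ := h1 q hq
  have hB₂ := h2 q hq
  have hq' : q * q⁻¹ = 1 := mul_inv_cancel₀ hq
  simp only [map_add, _root_.map_mul, map_sub, Polynomial.aeval_X, _root_.map_one]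
  rw [hB₁, hB₂, pow_succ, pow_succ, pow_succ]
  linear_combination ((-q) ^ (n + 1) * Polynomial.aeval q⁻¹ P₁
    - (-q) ^ n * q * Polynomial.aeval q⁻¹ P₂) * hq'

section Main
variable {V : Type*} [Fintype V] [DecidableEq V] (G : SimpleGraph V) [DecidableRel G.Adj]
set_option linter.unusedSectionVars false

theorem key_poly (hT : G.IsTree) (S : Finset V) :
    ∃ P : Polynomial ℤ, Pal S.card P ∧
      ∀ (F : Type) [Field F] [Fintype F] [DecidableEq F],
        (cnt G F S : ℤ) = P.eval (Fintype.card F : ℤ) := by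
  induction S using Finset.strongInduction with
  | _ S ih =>
    rcases S.eq_empty_or_nonempty with rfl | hS
    · refine ⟨1, pal_one, fun F _ _ _ => ?_⟩
      rw [cnt_empty]
      simp
    · obtain ⟨v, hvS, hleaf⟩ := exists_leaf hT S hS
      obtain ⟨P₁, hp₁, hc₁⟩ := ih (S.erase v) (Finset.erase_ssubset hvS)
      by_cases hnb : ∃ u ∈ S, G.Adj v u
      · obtain ⟨u, huS, hadj⟩ := hnb
        have huniq : ∀ w ∈ S, G.Adj v w → w = u := fun w hw haw => hleaf w u hw huS haw hadj
        have hu' : u ∈ S.erase v := Finset.mem_erase.mpr ⟨hadj.ne', huS⟩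
        obtain ⟨P₂, hp₂, hc₂⟩ := ih ((S.erase v).erase u)
          (Finset.ssubset_of_subset_of_ssubset (Finset.erase_subset u (S.erase v))
            (Finset.erase_ssubset hvS))
        refine ⟨(Polynomial.X - 1) * P₁ + Polynomial.X * P₂, ?_, ?_⟩
        · have e1 := Finset.card_erase_add_one hu'
          have e2 := Finset.card_erase_add_one hvS
          rw [← e1] at hp₁
          have : S.card = ((S.erase v).erase u).card + 2 := by omega
          rw [this]
          exact pal_step2 hp₁ hp₂
        · intro F _ _ _
          rw [cnt_leaf G F hvS huS hadj huniq]
          have h1 : (1 : ℕ) ≤ Fintype.card F := Fintype.card_pos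
          rw [Nat.cast_add, Nat.cast_mul, Nat.cast_mul, Nat.cast_sub h1, hc₁ F, hc₂ F]
          simp only [Polynomial.eval_add, Polynomial.eval_mul, Polynomial.eval_sub,
            Polynomial.eval_X, Polynomial.eval_one, Nat.cast_one]
      · push_neg at hnb
        refine ⟨(Polynomial.X - 1) * P₁, ?_, ?_⟩
        · have e2 := Finset.card_erase_add_one hvS
          rw [← e2]
          exact pal_step1 hp₁
        · intro F _ _ _
          rw [cnt_isolated G F hvS hnb]
          have h1 : (1 : ℕ) ≤ Fintype.card F := Fintype.card_pos
          rw [Nat.cast_mul, Nat.cast_sub h1, hc₁ F]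
          simp only [Polynomial.eval_mul, Polynomial.eval_sub,
            Polynomial.eval_X, Polynomial.eval_one, Nat.cast_one]

lemma nat_card_eq_cnt (F : Type) [Field F] [Fintype F] [DecidableEq F] :
    Nat.card {d : V → F // (G.adjMatrix F + Matrix.diagonal d).det ≠ 0}
      = cnt G F (Finset.univ : Finset V) := by
  have hmat : ∀ d : V → F, G.adjMatrix F + Matrix.diagonal d = matS G Finset.univ d := by
    intro d
    ext i j
    by_cases hij : i = j
    · subst hij
      simp [matS, Matrix.add_apply, SimpleGraph.adjMatrix_apply, Matrix.diagonal_apply_eq]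
    · simp [matS, Matrix.add_apply, SimpleGraph.adjMatrix_apply,
        Matrix.diagonal_apply_ne _ hij, hij]
  rw [cnt, Nat.card_eq_fintype_card, Fintype.card_subtype]
  congr 1
  apply Finset.filter_congr
  intro d _
  rw [hmat d]
  simp

end Main

/-- Sign-degree-palindromicity: if `S ∈ ℤ[q]` evaluates, at the cardinality of
every finite field `F`, to the number of invertible Schrödinger operators of a
tree `T` with `n` vertices over `F`, then `S(q) = (-q)^n · S(1/q)`. -/
theorem stmt_15 (V : Type*) [Fintype V] [DecidableEq V]
    (G : SimpleGraph V) [DecidableRel G.Adj] (hT : G.IsTree)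
    (S : Polynomial ℤ)
    (hS : ∀ (F : Type) [Field F] [Fintype F],
      S.eval (Fintype.card F : ℤ)
        = Nat.card {d : V → F // (G.adjMatrix F + Matrix.diagonal d).det ≠ 0})
    (q : ℚ) (hq : q ≠ 0) :
    Polynomial.aeval q S = (-q) ^ (Fintype.card V) * Polynomial.aeval q⁻¹ S := by
  obtain ⟨P, hPal, hcnt⟩ := key_poly G hT Finset.univ
  have hSP : S = P := by
    apply Polynomial.eq_of_infinite_eval_eq
    apply Set.Infinite.mono (s := (fun p : ℕ => (p : ℤ)) '' {p | p.Prime})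
    · rintro _ ⟨p, hp, rfl⟩
      haveI : Fact p.Prime := ⟨hp⟩
      haveI : NeZero p := ⟨hp.ne_zero⟩
      have h1 := hS (ZMod p)
      have h2 := hcnt (ZMod p)
      have h3 := nat_card_eq_cnt G (ZMod p)
      simp only [Set.mem_setOf_eq]
      rw [show ((p : ℕ) : ℤ) = ((Fintype.card (ZMod p) : ℕ) : ℤ) by rw [ZMod.card]]
      rw [h1, h3, h2]
    · exact Set.Infinite.image (fun a _ b _ h => Nat.cast_injective h)
        Nat.infinite_setOf_prime
  rw [hSP, ← Finset.card_univ]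
  exact hPal q hq
end

section
/- Let T be a finite tree with n vertices. The number of invertible T-matrices over F_q equals (q-1)^(2n-2) · S_T(q), where S_T(q) is the number of invertible Schrödinger operators of T over F_q. -/
open SimpleGraph Matrix

namespace Stmt16Aux

variable {V F : Type*} [Field F] {G : SimpleGraph V}

/-- Propagate scaling factors along a walk. -/
def go (a : G.Dart → Fˣ) : ∀ {u v : V}, G.Walk u v → Fˣ × Fˣ → Fˣ × Fˣ
  | _, _, .nil, p => p
  | u, _, .cons (v := u') h w, p =>
      go a w ((a ⟨(u', u), h.symm⟩ * p.2)⁻¹, (a ⟨(u, u'), h⟩ * p.1)⁻¹)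

theorem go_concat (a : G.Dart → Fˣ) {u x t : V} (w : G.Walk u x) (h : G.Adj x t) (p : Fˣ × Fˣ) :
    go a (w.concat h) p =
      ((a ⟨(t, x), h.symm⟩ * (go a w p).2)⁻¹, (a ⟨(x, t), h⟩ * (go a w p).1)⁻¹) := by
  induction w generalizing p with
  | nil => rfl
  | cons h' w ih => rw [Walk.concat_cons]; exact ih _ _

theorem exists_scaling [DecidableEq V] (hT : G.IsTree) (a : G.Dart → Fˣ) :
    ∃ α β : V → Fˣ, ∀ (s t : V) (h : G.Adj s t), α s * a ⟨(s, t), h⟩ * β t = 1 := by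
  obtain ⟨r⟩ := hT.isConnected.nonempty
  choose pw hpw hup using hT.existsUnique_path r
  simp only [and_imp] at hup
  have key : ∀ (s t : V) (h : G.Adj s t),
      pw t = (pw s).concat h ∨ pw s = (pw t).concat h.symm := by
    intro s t h
    by_cases ht : t ∈ (pw s).support
    · right
      have h1 : ((pw s).takeUntil t ht) = pw t := hup t _ ((hpw s).takeUntil ht)
      have h2 : ((pw s).dropUntil t ht) = Walk.cons h.symm Walk.nil := by
        have hp2 : (Walk.cons h.symm (Walk.nil : G.Walk s s)).IsPath := by
          simp [h.ne']
        have := hT.IsAcyclic.path_unique ⟨(pw s).dropUntil t ht, (hpw s).dropUntil ht⟩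
          ⟨Walk.cons h.symm Walk.nil, hp2⟩
        exact congrArg Subtype.val this
      calc pw s = ((pw s).takeUntil t ht).append ((pw s).dropUntil t ht) :=
            ((pw s).take_spec ht).symm
        _ = (pw t).concat h.symm := by rw [h1, h2, Walk.concat_eq_append]
    · left
      refine (hup t _ ?_).symm
      rw [← Walk.isPath_reverse_iff, Walk.reverse_concat]
      exact ((hpw s).reverse).cons (by simpa [Walk.support_reverse] using ht)
  refine ⟨fun v => (go a (pw v) 1).1, fun v => (go a (pw v) 1).2, ?_⟩
  intro s t h
  rcases key s t h with hk | hk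
  · have hb : (go a (pw t) 1).2 = (a ⟨(s, t), h⟩ * (go a (pw s) 1).1)⁻¹ := by
      rw [hk, go_concat]
    show (go a (pw s) 1).1 * a ⟨(s, t), h⟩ * (go a (pw t) 1).2 = 1
    rw [hb]
    exact mul_inv_eq_one.mpr (mul_comm _ _)
  · have ha : (go a (pw s) 1).1 = (a ⟨(s, t), h⟩ * (go a (pw t) 1).2)⁻¹ := by
      rw [hk, go_concat]
    show (go a (pw s) 1).1 * a ⟨(s, t), h⟩ * (go a (pw t) 1).2 = 1
    rw [ha, mul_assoc]
    exact inv_mul_cancel _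


variable [DecidableEq V] [DecidableRel G.Adj]

/-- The T-matrix with off-diagonal data `a` and diagonal `d`. -/
def Mmat (a : G.Dart → Fˣ) (d : V → F) : Matrix V V F :=
  Matrix.of fun s t => if h : G.Adj s t then (a ⟨(s, t), h⟩ : F) else if s = t then d s else 0

theorem Mmat_apply_dart (a : G.Dart → Fˣ) (d : V → F) (e : G.Dart) :
    Mmat a d e.fst e.snd = a e := by
  simp only [Mmat, Matrix.of_apply, dif_pos e.adj]

theorem Mmat_apply_diag (a : G.Dart → Fˣ) (d : V → F) (v : V) :
    Mmat a d v v = d v := by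
  simp [Mmat, G.irrefl]

theorem fiber_card [Fintype V] (hT : G.IsTree) (a : G.Dart → Fˣ) :
    Nat.card {d : V → F // (Mmat a d).det ≠ 0}
      = Nat.card {d : V → F // (G.adjMatrix F + Matrix.diagonal d).det ≠ 0} := by
  obtain ⟨α, β, hc⟩ := exists_scaling hT a
  have key : ∀ d : V → F,
      Matrix.diagonal (fun v => (α v : F)) * Mmat a d * Matrix.diagonal (fun v => (β v : F))
        = G.adjMatrix F + Matrix.diagonal (fun v => ((α v * β v : Fˣ) : F) * d v) := by
    intro d
    ext s t
    rw [Matrix.mul_diagonal, Matrix.diagonal_mul, Matrix.add_apply]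
    by_cases h : G.Adj s t
    · have hst : s ≠ t := G.ne_of_adj h
      have hcF : (α s : F) * (a ⟨(s, t), h⟩ : F) * (β t : F) = 1 := by
        simpa using congrArg Units.val (hc s t h)
      rw [Matrix.diagonal_apply_ne _ hst]
      simp only [Mmat, Matrix.of_apply, dif_pos h, SimpleGraph.adjMatrix_apply, if_pos h]
      rw [add_zero, ← hcF]
    · by_cases hst : s = t
      · subst hst
        simp only [Mmat, Matrix.of_apply, dif_neg h, if_pos rfl,
          SimpleGraph.adjMatrix_apply, if_neg h, Matrix.diagonal_apply_eq, zero_add,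
          Units.val_mul, if_true]
        ring
      · simp only [Mmat, Matrix.of_apply, dif_neg h, if_neg hst,
          SimpleGraph.adjMatrix_apply, if_neg h, Matrix.diagonal_apply_ne _ hst]
        ring
  have hα : (∏ v, (α v : F)) ≠ 0 := Finset.prod_ne_zero_iff.mpr fun v _ => (α v).ne_zero
  have hβ : (∏ v, (β v : F)) ≠ 0 := Finset.prod_ne_zero_iff.mpr fun v _ => (β v).ne_zero
  have hdet : ∀ d : V → F, (Mmat a d).det ≠ 0 ↔
      (G.adjMatrix F + Matrix.diagonal (fun v => ((α v * β v : Fˣ) : F) * d v)).det ≠ 0 := by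
    intro d
    rw [← key d, Matrix.det_mul, Matrix.det_mul, Matrix.det_diagonal, Matrix.det_diagonal]
    constructor
    · intro hM
      exact mul_ne_zero (mul_ne_zero hα hM) hβ
    · intro hM h0
      rw [h0, mul_zero, zero_mul] at hM
      exact hM rfl
  exact Nat.card_congr (Equiv.subtypeEquiv (Equiv.piCongrRight fun v =>
    Equiv.mulLeft₀ ((α v * β v : Fˣ) : F) (Units.ne_zero _)) hdet)

theorem recon [Fintype V] {M : Matrix V V F}
    (hM : ∀ s t : V, s ≠ t → (M s t ≠ 0 ↔ G.Adj s t)) :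
    Mmat (fun e => Units.mk0 (M e.fst e.snd) ((hM _ _ (G.ne_of_adj e.adj)).mpr e.adj))
        (fun v => M v v) = M := by
  ext s t
  simp only [Mmat, Matrix.of_apply]
  split_ifs with h h'
  · rfl
  · subst h'; rfl
  · have : ¬ M s t ≠ 0 := fun hne => h ((hM s t h').mp hne)
    exact (not_not.mp this).symm

theorem main_bij [Fintype V] :
    Function.Bijective
      (fun x : Σ a : G.Dart → Fˣ, {d : V → F // (Mmat a d).det ≠ 0} =>
        (⟨Mmat x.1 x.2.1, fun s t hst => by
            constructor
            · intro hne
              by_contra hadj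
              simp [Mmat, hadj, hst] at hne
            · intro hadj
              rw [show Mmat x.1 x.2.1 s t = x.1 ⟨(s, t), hadj⟩ from by
                simp [Mmat, hadj]]
              exact Units.ne_zero _
          , x.2.2⟩ :
          {M : Matrix V V F // (∀ s t : V, s ≠ t → (M s t ≠ 0 ↔ G.Adj s t)) ∧ M.det ≠ 0})) := by
  constructor
  · rintro ⟨a, d, hd⟩ ⟨a', d', hd'⟩ hMM
    simp only [Subtype.mk.injEq] at hMM
    obtain rfl : a = a' := by
      funext e
      have := congrFun (congrFun hMM e.fst) e.snd
      rw [Mmat_apply_dart, Mmat_apply_dart] at this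
      exact Units.ext this
    obtain rfl : d = d' := by
      funext v
      have := congrFun (congrFun hMM v) v
      rwa [Mmat_apply_diag, Mmat_apply_diag] at this
    rfl
  · rintro ⟨M, hM, hd⟩
    refine ⟨⟨fun e => Units.mk0 (M e.fst e.snd) ((hM _ _ (G.ne_of_adj e.adj)).mpr e.adj),
      fun v => M v v, ?_⟩, Subtype.ext (recon hM)⟩
    rw [recon hM]; exact hd

end Stmt16Aux

/-- The number of invertible `T`-matrices over `F_q` of a finite tree `T` with `n`
vertices equals `(q-1)^(2n-2)` times the number of invertible Schrödinger operators
of `T` over `F_q`. -/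
theorem stmt_16 (F : Type*) [Field F] [Fintype F]
    (V : Type*) [Fintype V] [DecidableEq V]
    (G : SimpleGraph V) [DecidableRel G.Adj] (hT : G.IsTree) :
    Nat.card {M : Matrix V V F //
        (∀ s t : V, s ≠ t → (M s t ≠ 0 ↔ G.Adj s t)) ∧ M.det ≠ 0}
      = (Fintype.card F - 1) ^ (2 * Fintype.card V - 2)
        * Nat.card {d : V → F // (G.adjMatrix F + Matrix.diagonal d).det ≠ 0} := by
  classical
  have hn : 1 ≤ Fintype.card V := Fintype.card_pos_iff.mpr hT.isConnected.nonempty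
  calc Nat.card {M : Matrix V V F //
        (∀ s t : V, s ≠ t → (M s t ≠ 0 ↔ G.Adj s t)) ∧ M.det ≠ 0}
      = Nat.card (Σ a : G.Dart → Fˣ, {d : V → F // (Stmt16Aux.Mmat a d).det ≠ 0}) :=
        (Nat.card_congr (Equiv.ofBijective _ (Stmt16Aux.main_bij (F := F) (G := G)))).symm
    _ = ∑ a : G.Dart → Fˣ, Nat.card {d : V → F // (Stmt16Aux.Mmat a d).det ≠ 0} := by
        rw [Nat.card_eq_fintype_card, Fintype.card_sigma]
        exact Finset.sum_congr rfl fun a _ => (Nat.card_eq_fintype_card).symm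
    _ = ∑ _a : G.Dart → Fˣ,
          Nat.card {d : V → F // (G.adjMatrix F + Matrix.diagonal d).det ≠ 0} :=
        Finset.sum_congr rfl fun a _ => Stmt16Aux.fiber_card hT a
    _ = Fintype.card (G.Dart → Fˣ)
          * Nat.card {d : V → F // (G.adjMatrix F + Matrix.diagonal d).det ≠ 0} := by
        rw [Finset.sum_const, Finset.card_univ, smul_eq_mul]
    _ = (Fintype.card F - 1) ^ (2 * Fintype.card V - 2)
          * Nat.card {d : V → F // (G.adjMatrix F + Matrix.diagonal d).det ≠ 0} := by
        rw [Fintype.card_fun, Fintype.card_units,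
          SimpleGraph.dart_card_eq_twice_card_edges]
        have he := hT.card_edgeFinset
        congr 2
        omega
end
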